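/- arXiv:1910.14146 — 6 statements merged into one kernel-verified Lean document; each statement's English description precedes it below -/
import Mathlib

section
/- Let H be a subgroup of a group G and assume H is left relatively convex in G. Then for every integer k ≥ 2 and every g ∈ G, if there exist h₁, …, h_k ∈ H with g h₁ g h₂ ⋯ g h_k = 1, then g ∈ H. In other words, the pair (G,H) is ∞-relatively torsion-free. -/
/-- A subgroup `H ≤ G` is *left relatively convex* if there is a total (linear) order on the
left coset space `G ⧸ H` that is invariant under the left multiplication action of `G`. -/
def LeftRelativelyConvex (G : Type*) [Group G] (H : Subgroup G) : Prop :=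
  ∃ r : (G ⧸ H) → (G ⧸ H) → Prop, IsLinearOrder (G ⧸ H) r ∧
    ∀ (g : G) (x y : G ⧸ H), r x y → r (g • x) (g • y)

private lemma aux_rtf {G : Type*} [Group G] (H : Subgroup G)
    (r : (G ⧸ H) → (G ⧸ H) → Prop) (lin : IsLinearOrder (G ⧸ H) r)
    (inv : ∀ (g : G) (x y : G ⧸ H), r x y → r (g • x) (g • y))
    (g : G) (hgr : r ((1 : G) : G ⧸ H) (g • ((1 : G) : G ⧸ H))) (hgne : g • ((1 : G) : G ⧸ H) ≠ ((1 : G) : G ⧸ H)) :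
    ∀ l : List G, (∀ w ∈ l, w • ((1 : G) : G ⧸ H) = g • ((1 : G) : G ⧸ H)) → l ≠ [] →
      r ((1 : G) : G ⧸ H) (l.prod • ((1 : G) : G ⧸ H)) ∧ l.prod • ((1 : G) : G ⧸ H) ≠ ((1:G) : G ⧸ H) := by
  intro l
  induction l with
  | nil => intro _ hne; exact absurd rfl hne
  | cons w t ih =>
    intro hmem _
    have hw : w • ((1 : G) : G ⧸ H) = g • ((1 : G) : G ⧸ H) := hmem w List.mem_cons_self
    rcases eq_or_ne t [] with rfl | hne
    · simpa [hw] using And.intro hgr hgne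
    · obtain ⟨h1, h2⟩ := ih (fun x hx => hmem x (List.mem_cons_of_mem w hx)) hne
      have hsmul : (w :: t).prod • ((1 : G) : G ⧸ H) = w • (t.prod • ((1 : G) : G ⧸ H)) := by
        rw [List.prod_cons, mul_smul]
      have h3 : r (w • ((1 : G) : G ⧸ H)) (w • (t.prod • ((1 : G) : G ⧸ H))) := inv w _ _ h1
      rw [hw] at h3
      constructor
      · rw [hsmul]; exact lin.trans _ _ _ hgr h3
      · intro hcontra
        rw [hsmul] at hcontra
        rw [hcontra] at h3
        exact hgne (lin.antisymm _ _ h3 hgr)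

/-- **Left relatively convex subgroups are relatively torsion-free** (Lemma
"left relatively convex implies RTF").  If `H` is left relatively convex in `G`, then for
every `k ≥ 2` and every `g ∈ G`, an equation `g h₁ g h₂ ⋯ g h_k = 1` with all `hᵢ ∈ H`
forces `g ∈ H`; that is, the pair `(G, H)` is `∞`-relatively torsion-free. -/
theorem mem_of_leftRelativelyConvex {G : Type*} [Group G] (H : Subgroup G)
    (hconv : LeftRelativelyConvex G H)
    (k : ℕ) (hk : 2 ≤ k) (g : G) (h : Fin k → G) (hh : ∀ i, h i ∈ H)
    (hprod : (List.ofFn fun i => g * h i).prod = 1) :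
    g ∈ H := by
  obtain ⟨r, lin, inv⟩ := hconv
  by_contra hg
  have hgne : g • ((1 : G) : G ⧸ H) ≠ ((1:G) : G ⧸ H) := by
    intro hc
    apply hg
    have : (QuotientGroup.mk g : G ⧸ H) = QuotientGroup.mk 1 := by
      simpa [QuotientGroup.mk_one, smul_eq_mul] using hc
    have := QuotientGroup.eq.mp this
    simpa using H.inv_mem this
  set l : List G := List.ofFn fun i => g * h i with hl
  have hlne : l ≠ [] := by
    have : l.length = k := by simp [hl]
    intro hc; rw [hc] at this; simp at this; omega
  have hmem : ∀ w ∈ l, w • ((1 : G) : G ⧸ H) = g • ((1 : G) : G ⧸ H) := by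
    intro w hw
    rw [hl, List.mem_ofFn] at hw
    obtain ⟨i, rfl⟩ := hw
    show (QuotientGroup.mk (g * h i * 1) : G ⧸ H) = QuotientGroup.mk (g * 1)
    rw [mul_one, mul_one, QuotientGroup.eq]
    simpa using hh i
  have hp1 : l.prod • ((1 : G) : G ⧸ H) = ((1 : G) : G ⧸ H) := by rw [hprod, one_smul]
  rcases lin.total ((1 : G) : G ⧸ H) (g • ((1 : G) : G ⧸ H)) with hr | hr
  · exact (aux_rtf H r lin inv g hr hgne l hmem hlne).2 hp1
  · have lin' : IsLinearOrder (G ⧸ H) (Function.swap r) := by haveI := lin; infer_instance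
    have inv' : ∀ (g : G) (x y : G ⧸ H), Function.swap r x y →
        Function.swap r (g • x) (g • y) := fun g x y hxy => inv g y x hxy
    exact (aux_rtf H (Function.swap r) lin' inv' g hr hgne l hmem hlne).2 hp1
end

section
/- Let V be a group with subgroups A, B ≤ V, let φ : A → B be an isomorphism, and let G = V∗_φ be the associated HNN extension. Let 3 ≤ n ≤ ∞. If the pairs (V, A) and (V, B) are n-relatively torsion-free, then the pair (G, V) is n-relatively torsion-free, where V is regarded as a subgroup of G. -/
section RTF

variable {G : Type*} [Group G]

/-- `g` is a relative `k`-torsion for the pair `(G, H)`. -/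
def IsRelTorsion (H : Subgroup G) (g : G) (k : ℕ) : Prop :=
  g ∉ H ∧ ∃ h : Fin k → G, (∀ i, h i ∈ H) ∧ (List.ofFn fun i => g * h i).prod = 1

/-- The pair `(G, H)` is `n`-relatively torsion-free (`n`-RTF), for `n ∈ ℕ∞`:
there is no relative `k`-torsion for any `2 ≤ k < n`. -/
def IsRTF (H : Subgroup G) (n : ℕ∞) : Prop :=
  ∀ k : ℕ, 2 ≤ k → (k : ℕ∞) < n → ∀ g : G, ¬ IsRelTorsion H g k

end RTF

section HNNRTFAux
open HNNExtension HNNExtension.NormalWord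

variable {V : Type*} [Group V] (A B : Subgroup V) (φ : A ≃* B)

namespace RTFAux


def prodL (L : List (ℤˣ × V)) : HNNExtension V A B φ :=
  (L.map (fun x => t ^ (x.1 : ℤ) * of x.2)).prod

def Rel : (ℤˣ × V) → (ℤˣ × V) → Prop :=
  fun a b => a.2 ∈ toSubgroup A B a.1 → a.1 = b.1

@[simp] lemma prodL_nil : prodL A B φ [] = 1 := rfl

@[simp] lemma prodL_cons (e : ℤˣ) (x : V) (L : List (ℤˣ × V)) :
    prodL A B φ ((e, x) :: L) = t ^ (e : ℤ) * (of x * prodL A B φ L) := by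
  simp [prodL, mul_assoc]

@[simp] lemma prodL_append (L₁ L₂ : List (ℤˣ × V)) :
    prodL A B φ (L₁ ++ L₂) = prodL A B φ L₁ * prodL A B φ L₂ := by
  simp [prodL]

/-- the element `t^η * x * t^δ`, the form in which separators appear -/
def kap (δ η : ℤˣ) (x : V) : HNNExtension V A B φ :=
  t ^ (η : ℤ) * of x * t ^ (δ : ℤ)

/-- the value `u` of the word `(w₁, M)` -/
def uval (w₁ : V) (M : List (ℤˣ × V)) : HNNExtension V A B φ :=
  of w₁ * prodL A B φ M

/-- `u c₁ u c₂ ⋯ u cᵣ · (u κ(x₁) u κ(x₂) ⋯ u κ(x_s)) · u` -/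
def Qval (δ η : ℤˣ) (w₁ : V) (M : List (ℤˣ × V)) (cs xs : List V) :
    HNNExtension V A B φ :=
  (cs.map (fun c => uval A B φ w₁ M * of c)).prod *
    ((xs.map (fun x => uval A B φ w₁ M * kap A B φ δ η x)).prod * uval A B φ w₁ M)

lemma Qval_pinch (δ η : ℤˣ) (w₁ : V) (M : List (ℤˣ × V)) (cs xs' : List V)
    (x c' : V) (hκ : kap A B φ δ η x = of c') :
    Qval A B φ δ η w₁ M cs (x :: xs') = Qval A B φ δ η w₁ M (cs ++ [c']) xs' := by
  simp only [Qval, List.map_cons, List.prod_cons, List.map_append, List.prod_append,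
    List.map_nil, List.prod_nil, List.map_cons, List.prod_cons, mul_one, hκ, mul_assoc]

lemma Qval_glue (δ η : ℤˣ) (w₁ : V) (M : List (ℤˣ × V)) (cs xs' : List V) (x : V) :
    Qval A B φ δ η w₁ M cs (x :: xs') =
      Qval A B φ δ η w₁ M cs [] *
        (kap A B φ δ η x * Qval A B φ δ η w₁ M [] xs') := by
  simp only [Qval, List.map_cons, List.prod_cons, List.map_nil, List.prod_nil, one_mul,
    mul_one, mul_assoc]

lemma Qval_nilM (δ η : ℤˣ) (w₁ : V) (cs : List V) :
    Qval A B φ δ η w₁ [] cs [] = of ((cs.map (fun c => w₁ * c)).prod * w₁) := by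
  induction cs with
  | nil => simp [Qval, uval]
  | cons c cs ih =>
    simp only [Qval, uval, prodL_nil, mul_one, List.map_cons, List.prod_cons, List.map_nil,
      List.prod_nil, one_mul, mul_assoc] at ih ⊢
    rw [ih]
    simp [mul_assoc]

lemma Qval_flat (δ η γ : ℤˣ) (w₁ v : V) (cs : List V) :
    Qval A B φ δ η w₁ [(γ, v)] cs [] =
      of w₁ * prodL A B φ (cs.map (fun c => (γ, v * c * w₁)) ++ [(γ, v)]) := by
  induction cs with
  | nil => simp [Qval, uval, mul_assoc]
  | cons c cs ih =>
    simp only [Qval, uval, List.map_cons, List.prod_cons, List.map_nil, List.prod_nil,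
      one_mul, mul_one, mul_assoc] at ih ⊢
    rw [ih]
    simp [mul_assoc]

lemma Qval_VLD (δ η γ γ' : ℤˣ) (w₁ v v' : V) (M₂ : List (ℤˣ × V)) (cs : List V) :
    Qval A B φ δ η w₁ ((γ, v) :: (M₂ ++ [(γ', v')])) cs [] =
      of w₁ * (t ^ (γ : ℤ) *
        (Qval A B φ γ γ' v M₂ [] (cs.map (fun c => v' * c * w₁))) *
        (t ^ (γ' : ℤ) * of v')) := by
  induction cs with
  | nil =>
    simp [Qval, uval, kap, mul_assoc]
  | cons c cs ih =>
    simp only [Qval, uval, kap, List.map_cons, List.prod_cons, List.map_nil, List.prod_nil,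
      one_mul, mul_one, prodL_cons, prodL_append, prodL_nil, mul_assoc] at ih ⊢
    rw [ih]
    simp [mul_assoc]





/-- the chain relation does not depend on the second component of the second letter -/
lemma chain'_snoc_irrel {l : List (ℤˣ × V)} {e : ℤˣ} {x y : V}
    (h : List.Chain' (Rel A B) (l ++ [(e, x)])) :
    List.Chain' (Rel A B) (l ++ [(e, y)]) := by
  unfold List.Chain' at h ⊢
  rw [List.isChain_append] at h ⊢
  refine ⟨h.1, List.isChain_singleton _, ?_⟩
  intro p hp q hq
  simp only [List.head?_cons, Option.mem_some_iff] at hq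
  subst hq
  have := h.2.2 p hp (e, x) rfl
  exact fun hm => this hm

/-- gluing two *block* chains along a non-pinching separator -/
lemma chain_glue {δ η : ℤˣ} {yb y' x : V} {Bl N' : List (ℤˣ × V)}
    (hb : ∀ z : V, List.Chain' (Rel A B) ((δ, yb) :: (Bl ++ [(η, z)])))
    (h' : ∀ z : V, List.Chain' (Rel A B) ((δ, y') :: (N' ++ [(η, z)])))
    (hx : Rel A B (η, x) (δ, y')) :
    ∀ z : V, List.Chain' (Rel A B)
      ((δ, yb) :: ((Bl ++ (η, x) :: (δ, y') :: N') ++ [(η, z)])) := by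
  intro z
  have heq : (δ, yb) :: ((Bl ++ (η, x) :: (δ, y') :: N') ++ [(η, z)]) =
      (((δ, yb) :: Bl) ++ [(η, x)]) ++ ((δ, y') :: (N' ++ [(η, z)])) := by
    simp
  rw [heq]
  unfold List.Chain'
  rw [List.isChain_append]
  refine ⟨hb x, h' z, ?_⟩
  intro p hp q hq
  rw [List.getLast?_concat] at hp
  simp only [Option.mem_some_iff] at hp
  simp only [List.head?_cons, Option.mem_some_iff] at hq
  subst hp; subst hq
  exact hx

/-- wrapping a block chain: `(δ,w₁) :: (γ,y₂) :: N₂ ++ [(γ',v')] ++ [(η,z)]` -/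
lemma chain_wrap {δ η γ γ' : ℤˣ} {w₁ y₂ v' : V} {N₂ : List (ℤˣ × V)}
    (h₂ : ∀ z : V, List.Chain' (Rel A B) ((γ, y₂) :: (N₂ ++ [(γ', z)])))
    (hhead : Rel A B (δ, w₁) (γ, y₂))
    (hlast : ∀ z : V, Rel A B (γ', v') (η, z)) :
    ∀ z : V, List.Chain' (Rel A B)
      ((δ, w₁) :: (((γ, y₂) :: (N₂ ++ [(γ', v')])) ++ [(η, z)])) := by
  intro z
  have heq : (δ, w₁) :: (((γ, y₂) :: (N₂ ++ [(γ', v')])) ++ [(η, z)]) =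
      (((δ, w₁) :: (γ, y₂) :: N₂) ++ [(γ', v')]) ++ [(η, z)] := by
    simp
  rw [heq]
  unfold List.Chain'
  rw [List.isChain_append]
  refine ⟨?_, List.isChain_singleton _, ?_⟩
  · have heq2 : ((δ, w₁) :: (γ, y₂) :: N₂) ++ [(γ', v')] =
        (δ, w₁) :: ((γ, y₂) :: (N₂ ++ [(γ', v')])) := by simp
    rw [heq2, List.isChain_cons]
    exact ⟨fun p hp => by simp at hp; subst hp; exact hhead, h₂ v'⟩
  · intro p hp q hq
    rw [List.getLast?_concat] at hp
    simp only [Option.mem_some_iff] at hp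
    simp only [List.head?_cons, Option.mem_some_iff] at hq
    subst hp; subst hq
    exact hlast z

/-- chain for the all-same-sign flat word -/
lemma chain_flat {γ η : ℤˣ} {v : V} (g : V → V) (cs : List V)
    (a : ℤˣ × V) (ha : a.2 ∈ toSubgroup A B a.1 → a.1 = γ)
    (hlast : ∀ z : V, Rel A B (γ, v) (η, z)) (z : V) :
    List.Chain' (Rel A B)
      (a :: ((cs.map (fun c => (γ, g c)) ++ [(γ, v)]) ++ [(η, z)])) := by
  induction cs generalizing a with
  | nil =>
    simp only [List.map_nil, List.nil_append, List.cons_append]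
    exact List.isChain_cons_cons.2 ⟨ha, List.isChain_cons_cons.2 ⟨hlast z, List.isChain_singleton _⟩⟩
  | cons c cs ih =>
    simp only [List.map_cons, List.cons_append] at ih ⊢
    exact List.isChain_cons_cons.2 ⟨ha, ih (γ, g c) (fun _ => rfl)⟩



lemma conj_pow (η : ℤˣ) (x : V) (hx : x ∈ toSubgroup A B η) :
    (t ^ (η : ℤ) * of x * t ^ ((-η : ℤˣ) : ℤ) : HNNExtension V A B φ) =
      of ((toSubgroupEquiv φ η ⟨x, hx⟩ : toSubgroup A B (-η)) : V) := by
  rcases Int.units_eq_one_or η with rfl | rfl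
  · simp [equiv_eq_conj, mul_assoc]
    rw [← mul_assoc]; exact (equiv_eq_conj (φ := φ) (⟨x, hx⟩ : A)).symm
  · rw [show ((-1 : ℤˣ) : ℤ) = -1 from rfl, show ((-(-1) : ℤˣ) : ℤ) = 1 from rfl,
      zpow_neg_one, zpow_one]
    simp only [toSubgroupEquiv_neg_one]
    exact (equiv_symm_eq_conj ⟨x, hx⟩).symm

lemma udi (δ η : ℤˣ) : δ = η ∨ δ = -η := by
  rcases Int.units_eq_one_or δ with rfl | rfl <;>
    rcases Int.units_eq_one_or η with rfl | rfl <;> simp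

lemma hW_extract {δ η γ γ' : ℤˣ} {w₁ v v' : V} {M₂ : List (ℤˣ × V)}
    (hW : ∀ z : V, List.Chain' (Rel A B)
      ((δ, w₁) :: ((((γ, v) :: (M₂ ++ [(γ', v')])) ++ [(η, z)])))) :
    (∀ z : V, List.Chain' (Rel A B) ((γ, v) :: (M₂ ++ [(γ', z)]))) ∧
      Rel A B (δ, w₁) (γ, v) ∧ (∀ z : V, Rel A B (γ', v') (η, z)) := by
  have h1 := hW 1
  have heq : (δ, w₁) :: ((((γ, v) :: (M₂ ++ [(γ', v')])) ++ [(η, (1:V))])) =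
      (((δ, w₁) :: (γ, v) :: M₂) ++ [(γ', v')]) ++ [(η, (1:V))] := by simp
  rw [heq] at h1
  unfold List.Chain' at h1
  rw [List.isChain_append] at h1
  obtain ⟨hL, -, hbd⟩ := h1
  have hL' : List.Chain' (Rel A B) ((δ, w₁) :: (γ, v) :: (M₂ ++ [(γ', v')])) := hL
  obtain ⟨hdw, htl⟩ := List.isChain_cons_cons.1 hL'
  refine ⟨?_, hdw, ?_⟩
  · intro z
    exact chain'_snoc_irrel A B (l := (γ, v) :: M₂) htl
  · intro z
    have := hbd (γ', v') (by rw [List.getLast?_concat]; rfl) (η, 1) rfl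
    exact fun hm => this hm

theorem core (n : ℕ∞) (hsub : ∀ ζ : ℤˣ, IsRTF (toSubgroup A B ζ) n)
    (k₀ : ℕ) (hk₀ : (k₀ : ℕ∞) < n) :
    ∀ (fuel : ℕ) (δ η : ℤˣ) (w₁ : V) (M : List (ℤˣ × V)) (cs xs : List V),
    (∀ z : V, List.Chain' (Rel A B) ((δ, w₁) :: (M ++ [(η, z)]))) →
    (∀ c ∈ cs, c ∈ toSubgroup A B δ) →
    cs.length + xs.length + 1 ≤ k₀ →
    (k₀ + 2) * M.length + xs.length < fuel →
    ∃ (y : V) (N : List (ℤˣ × V)),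
      of y * prodL A B φ N = Qval A B φ δ η w₁ M cs xs ∧
        ∀ z : V, List.Chain' (Rel A B) ((δ, y) :: (N ++ [(η, z)])) := by
  intro fuel
  induction fuel with
  | zero => intro _ _ _ _ _ _ _ _ _ hfuel; omega
  | succ f ih => ?_
  intro δ η w₁ M cs xs hW hcs hbud hfuel
  rcases xs with _ | ⟨x, xs'⟩
  · -- xs = []
    rcases M with _ | ⟨⟨γ, v⟩, M'⟩
    · -- M = [] : the base case, uses the relative torsion-freeness hypothesis
      have hw₁rel : w₁ ∈ toSubgroup A B δ → δ = η := by
        have h := hW 1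
        rw [List.nil_append] at h
        exact List.isChain_pair.1 h
      have hgood : ((cs.map (fun c => w₁ * c)).prod * w₁) ∈ toSubgroup A B δ → δ = η := by
        by_cases hδη : δ = η
        · exact fun _ => hδη
        · intro hqmem
          exfalso
          have hw₁ : w₁ ∉ toSubgroup A B δ := fun hm => hδη (hw₁rel hm)
          have hcs0 : cs ≠ [] := by
            rintro rfl
            simp only [List.map_nil, List.prod_nil, one_mul] at hqmem
            exact hw₁ hqmem
          set q : V := (cs.map (fun c => w₁ * c)).prod * w₁ with hqdef
          set l : List V := cs ++ [q⁻¹] with hldef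
          have hlen : l.length = cs.length + 1 := by simp [hldef]
          refine hsub δ l.length ?_ ?_ w₁ ⟨hw₁, fun i => l.get i, ?_, ?_⟩
          · have : cs.length ≠ 0 := fun h => hcs0 (List.length_eq_zero_iff.1 h)
            omega
          · refine lt_of_le_of_lt ?_ hk₀
            have : l.length ≤ k₀ := by simp at hbud; omega
            exact_mod_cast Nat.cast_le.2 this
          · intro i
            show l.get i ∈ toSubgroup A B δ
            have hmem : l.get i ∈ l := List.get_mem l i
            rcases List.mem_append.1 hmem with h | h
            · exact hcs _ h
            · simp only [List.mem_singleton] at h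
              rw [h]
              exact inv_mem hqmem
          · have h1 : (List.ofFn fun i => w₁ * l.get i) = l.map (fun c => w₁ * c) := by
              apply List.ext_getElem
              · simp
              · intro i h₁ h₂
                simp
            rw [h1, hldef, List.map_append, List.prod_append]
            simp only [List.map_cons, List.map_nil, List.prod_cons, List.prod_nil, mul_one]
            rw [hqdef]
            group
      refine ⟨(cs.map (fun c => w₁ * c)).prod * w₁, [], ?_, ?_⟩
      · rw [Qval_nilM]
        simp
      · intro z
        rw [List.nil_append]
        exact List.isChain_pair.2 hgood
    · rcases List.eq_nil_or_concat M' with rfl | ⟨M₂, ⟨γ', v'⟩, rfl⟩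
      · -- M = [(γ, v)] : the flat case
        have h1 := hW 1
        have hha : w₁ ∈ toSubgroup A B δ → δ = γ := (List.isChain_cons_cons.1 h1).1
        have hlast : ∀ z : V, Rel A B (γ, v) (η, z) := by
          intro z
          have := (List.isChain_cons_cons.1 (List.isChain_cons_cons.1 h1).2).1
          exact fun hm => this hm
        refine ⟨w₁, cs.map (fun c => (γ, v * c * w₁)) ++ [(γ, v)],
          (Qval_flat A B φ δ η γ w₁ v cs).symm, ?_⟩
        intro z
        exact chain_flat A B (fun c => v * c * w₁) cs (δ, w₁) hha hlast z
      · -- M = (γ, v) :: (M₂ ++ [(γ', v')]) : the level-down case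
        simp only [List.concat_eq_append] at hW ⊢
        obtain ⟨hW₂, hhead, hlast⟩ := hW_extract A B hW
        obtain ⟨y₂, N₂, hv₂, hc₂⟩ := ih γ γ' v M₂ [] (cs.map (fun c => v' * c * w₁)) hW₂
          (by simp)
          (by simp only [List.length_nil, List.length_cons, List.length_append, List.length_map, List.length_concat] at hbud ⊢; omega)
          (by
            have hexp : (k₀ + 2) * (M₂.length + 1 + 1) =
                (k₀ + 2) * M₂.length + 2 * (k₀ + 2) := by ring
            simp only [List.length_nil, List.length_cons, List.length_append, List.length_map, List.length_concat] at hbud hfuel ⊢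
            rw [hexp] at hfuel
            omega)
        refine ⟨w₁, (γ, y₂) :: (N₂ ++ [(γ', v')]), ?_, ?_⟩
        · rw [Qval_VLD, ← hv₂]
          simp [mul_assoc]
        · exact chain_wrap A B hc₂ hhead hlast
  · -- xs = x :: xs'
    by_cases hpin : δ = -η ∧ x ∈ toSubgroup A B η
    · -- pinch: absorb the separator into a base-group letter
      obtain ⟨hδη, hx⟩ := hpin
      have hc' : ((toSubgroupEquiv φ η ⟨x, hx⟩ : toSubgroup A B (-η)) : V) ∈
          toSubgroup A B δ := by
        rw [hδη]; exact (toSubgroupEquiv φ η ⟨x, hx⟩).2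
      have hκ : kap A B φ δ η x =
          of ((toSubgroupEquiv φ η ⟨x, hx⟩ : toSubgroup A B (-η)) : V) := by
        rw [kap, hδη]
        exact conj_pow A B φ η x hx
      obtain ⟨y, N, hval, hch⟩ := ih δ η w₁ M
        (cs ++ [((toSubgroupEquiv φ η ⟨x, hx⟩ : toSubgroup A B (-η)) : V)]) xs' hW
        (by
          intro c hc
          rcases List.mem_append.1 hc with h | h
          · exact hcs c h
          · simp only [List.mem_singleton] at h
            rw [h]; exact hc')
        (by simp only [List.length_nil, List.length_cons, List.length_append, List.length_map, List.length_concat] at hbud ⊢; omega)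
        (by simp only [List.length_nil, List.length_cons, List.length_append, List.length_map, List.length_concat] at hfuel ⊢; omega)
      exact ⟨y, N, by rw [hval, Qval_pinch A B φ δ η w₁ M cs xs' x _ hκ], hch⟩
    · -- non-pinching separator: glue two blocks
      obtain ⟨yb, Bl, hvb, hcb⟩ := ih δ η w₁ M cs [] hW hcs
        (by simp only [List.length_nil, List.length_cons, List.length_append, List.length_map, List.length_concat] at hbud ⊢; omega)
        (by simp only [List.length_nil, List.length_cons, List.length_append, List.length_map, List.length_concat] at hfuel ⊢; omega)
      obtain ⟨y', N', hv', hc'⟩ := ih δ η w₁ M [] xs' hW (by simp)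
        (by simp only [List.length_nil, List.length_cons, List.length_append, List.length_map, List.length_concat] at hbud ⊢; omega)
        (by simp only [List.length_nil, List.length_cons, List.length_append, List.length_map, List.length_concat] at hfuel ⊢; omega)
      have hx : Rel A B (η, x) (δ, y') := by
        intro hm
        rcases udi δ η with h | h
        · exact h.symm
        · exact absurd ⟨h, hm⟩ hpin
      refine ⟨yb, Bl ++ (η, x) :: (δ, y') :: N', ?_, ?_⟩
      · rw [Qval_glue, ← hvb, ← hv']
        simp [kap, mul_assoc]
      · exact chain_glue A B hcb hc' hx

lemma exists_red (g : HNNExtension V A B φ) :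
    ∃ (v₀ : V) (L : List (ℤˣ × V)), g = of v₀ * prodL A B φ L ∧ L.Chain' (Rel A B) := by
  rcases TransversalPair.nonempty V A B with ⟨d⟩
  refine ⟨((equiv φ d) g).head, ((equiv φ d) g).toList, ?_, ((equiv φ d) g).chain⟩
  conv_lhs => rw [← (equiv φ d).symm_apply_apply g]
  rfl

lemma britton (v₀ : V) (N : List (ℤˣ × V)) (hch : N.Chain' (Rel A B))
    (hr : of v₀ * prodL A B φ N ∈ (of : V →* HNNExtension V A B φ).range) :
    N = [] := by
  have := ReducedWord.toList_eq_nil_of_mem_of_range φ ⟨v₀, N, hch⟩ hr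
  exact this

lemma chain'_of_same_sign (ε : ℤˣ) : ∀ (l : List (ℤˣ × V)), (∀ p ∈ l, p.1 = ε) →
    List.Chain' (Rel A B) l := by
  intro l
  induction l with
  | nil => intro _; exact List.isChain_nil
  | cons a l ih =>
    intro h
    rcases l with _ | ⟨b, l'⟩
    · exact List.isChain_singleton a
    · refine List.isChain_cons_cons.2 ⟨?_, ih ?_⟩
      · intro _
        rw [h a (by simp), h b (by simp)]
      · intro p hp
        exact h p (by simp [hp])

theorem main_result (n : ℕ∞) (hA : IsRTF A n) (hB : IsRTF B n) :
    IsRTF ((HNNExtension.of : V →* HNNExtension V A B φ).range) n := by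
  have hsub : ∀ ζ : ℤˣ, IsRTF (toSubgroup A B ζ) n := by
    intro ζ
    rcases Int.units_eq_one_or ζ with rfl | rfl
    · rw [toSubgroup_one]; exact hA
    · rw [toSubgroup_neg_one]; exact hB
  intro k hk2 hkn g htor
  obtain ⟨hg, h, hmem, hprod⟩ := htor
  choose hh hhh using fun i => MonoidHom.mem_range.1 (hmem i)
  set hs : List V := List.ofFn hh with hsdef
  have hPk : ((hs.map (fun c => g * of c)).prod) = 1 := by
    have h1 : (fun i => g * h i) = fun i => g * of (hh i) := by
      funext i; rw [hhh i]
    rw [hsdef, List.map_ofFn]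
    rw [h1] at hprod
    exact hprod
  have hne : hs ≠ [] := by
    have : hs.length = k := by simp [hsdef]
    intro h0
    rw [h0] at this
    simp at this
    omega
  set cs₁ : List V := hs.dropLast with hcs₁
  set cl : V := hs.getLast hne with hcl
  have hsplit : hs = cs₁ ++ [cl] := (List.dropLast_append_getLast hne).symm
  have hlen1 : cs₁.length = k - 1 := by
    have : hs.length = k := by simp [hsdef]
    simp [hcs₁, this]
  set T : HNNExtension V A B φ := (cs₁.map (fun c => g * of c)).prod * g with hT
  have hTrange : T ∈ (HNNExtension.of : V →* HNNExtension V A B φ).range := by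
    have h2 : T * of cl = 1 := by
      rw [hsplit] at hPk
      rw [List.map_append, List.prod_append] at hPk
      rw [hT, mul_assoc]
      simpa [mul_assoc] using hPk
    refine ⟨cl⁻¹, ?_⟩
    have h3 : T = (of cl)⁻¹ := eq_inv_of_mul_eq_one_left h2
    rw [h3, map_inv]
  obtain ⟨v₀, LL, hgw, hch⟩ := exists_red A B φ g
  have hLL : LL ≠ [] := by
    rintro rfl
    exact hg ⟨v₀, by simp [hgw]⟩
  have hTQ : T = Qval A B φ 1 1 v₀ LL cs₁ [] := by
    rw [hT, Qval, uval, ← hgw]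
    simp
  rcases LL with _ | ⟨⟨δ, v₁⟩, LL'⟩
  · exact hLL rfl
  rcases List.eq_nil_or_concat LL' with rfl | ⟨M, ⟨η, vm⟩, rfl⟩
  · -- LL = [(δ, v₁)] : one letter only; the word is visibly reduced
    rw [Qval_flat] at hTQ
    have hchain : List.Chain' (Rel A B)
        (cs₁.map (fun c => (δ, v₁ * c * v₀)) ++ [(δ, v₁)]) := by
      apply chain'_of_same_sign A B δ
      intro p hp
      rcases List.mem_append.1 hp with hp | hp
      · obtain ⟨c, _, rfl⟩ := List.mem_map.1 hp
        rfl
      · simp only [List.mem_singleton] at hp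
        rw [hp]
    have := britton A B φ v₀ _ hchain (by rw [← hTQ]; exact hTrange)
    simp at this
  · -- LL = (δ, v₁) :: (M ++ [(η, vm)]) : the general case
    simp only [List.concat_eq_append] at hch hTQ
    have hW : ∀ z : V, List.Chain' (Rel A B) ((δ, v₁) :: (M ++ [(η, z)])) := by
      intro z
      exact chain'_snoc_irrel A B (l := (δ, v₁) :: M) hch
    have hkk : (k : ℕ∞) < n := hkn
    obtain ⟨y, N, hv, hc⟩ := core A B φ n hsub k hkk
      ((k + 2) * M.length + (cs₁.map (fun c => vm * c * v₀)).length + 1)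
      δ η v₁ M [] (cs₁.map (fun c => vm * c * v₀)) hW (by simp)
      (by simp only [List.length_nil, List.length_map]; omega)
      (by omega)
    rw [Qval_VLD, ← hv] at hTQ
    have hTw : T = of v₀ * prodL A B φ ((δ, y) :: (N ++ [(η, vm)])) := by
      rw [hTQ]
      simp [mul_assoc]
    have := britton A B φ v₀ _ (hc vm) (by rw [← hTw]; exact hTrange)
    simp at this

end RTFAux

end HNNRTFAux


/-- Let `G = V∗_φ` be the HNN extension associated to an isomorphism `φ : A ≃* B` between
subgroups `A, B ≤ V`, and let `3 ≤ n ≤ ∞`.  If the pairs `(V, A)` and `(V, B)` are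
`n`-relatively torsion-free, then so is the pair `(G, V)`, where `V` is regarded as a
subgroup of `G` via the canonical embedding. -/
theorem isRTF_HNN_of_isRTF {V : Type*} [Group V] (A B : Subgroup V) (φ : A ≃* B)
    (n : ℕ∞) (hn : 3 ≤ n)
    (hA : IsRTF A n) (hB : IsRTF B n) :
    IsRTF ((HNNExtension.of : V →* HNNExtension V A B φ).range) n :=
  RTFAux.main_result A B φ n hA hB
end

section
/- Let G be a finitely generated group, let H ≤ G be a subgroup admitting a symmetric Følner sequence (in particular H is amenable), and let φ : G → ℝ be a quasimorphism. Then there is a quasimorphism φ_H : G → ℝ such that: (i) φ_H(g⁻¹) = −φ_H(g) for all g ∈ G; (ii) sup_{g∈G} |φ_H(g) − φ(g)| ≤ 3·D(φ); (iii) φ_H is defect minimizing, i.e. D(φ_H) ≤ D(ψ) for every quasimorphism ψ on G with sup_{g∈G} |ψ(g) − φ(g)| < ∞; and (iv) φ_H(gh) = φ_H(g) + φ_H(h) = φ_H(hg) for all g ∈ G and h ∈ H. In particular, φ_H restricted to H is a homomorphism and equals there the homogenization h ↦ lim_{n→∞} φ(hⁿ)/n of φ. -/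
open Filter Topology

section QM

variable {G : Type*} [Group G]

/-- `φ : G → ℝ` is a quasimorphism: the quantity `|φ g + φ h - φ (g h)|` is uniformly
bounded. -/
def IsQuasimorphism (φ : G → ℝ) : Prop :=
  ∃ D : ℝ, ∀ g h : G, |φ g + φ h - φ (g * h)| ≤ D

/-- The defect `D(φ) = sup_{g,h} |φ g + φ h - φ (g h)|` of a quasimorphism, realized as the
least uniform bound. -/
noncomputable def defect (φ : G → ℝ) : ℝ :=
  sInf {D : ℝ | ∀ g h : G, |φ g + φ h - φ (g * h)| ≤ D}

/-- `F` is a symmetric Følner sequence for the subgroup `H ≤ G`:  a nested sequence of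
finite symmetric subsets of `H` exhausting `H`, such that `|h F_k Δ F_k| / |F_k| → 0` for
every `h ∈ H`. -/
def IsSymmetricFolnerSeq [DecidableEq G] (H : Subgroup G) (F : ℕ → Finset G) : Prop :=
  (∀ k, (F k : Set G) ⊆ (H : Set G)) ∧
  (∀ k, F k ⊆ F (k + 1)) ∧
  (∀ k, ∀ x, x ∈ F k ↔ x⁻¹ ∈ F k) ∧
  (∀ h ∈ H, ∃ k, h ∈ F k) ∧
  (∀ h ∈ H, Tendsto
    (fun k : ℕ => ((symmDiff ((F k).image (fun x => h * x)) (F k)).card : ℝ) / ((F k).card : ℝ))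
    atTop (𝓝 0))

end QM

section Aux
noncomputable def U : Ultrafilter ℕ := Ultrafilter.of atTop
lemma U_le_atTop : (U : Filter ℕ) ≤ atTop := Ultrafilter.of_le _
open scoped Classical in
noncomputable def ulim (u : ℕ → ℝ) : ℝ :=
  if h : ∃ L, Tendsto u (U : Filter ℕ) (𝓝 L) then h.choose else 0
lemma tendsto_ulim {u : ℕ → ℝ} (h : ∃ L, Tendsto u (U : Filter ℕ) (𝓝 L)) :
    Tendsto u (U : Filter ℕ) (𝓝 (ulim u)) := by
  classical
  rw [ulim, dif_pos h]; exact h.choose_spec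
lemma exists_lim_of_bdd {u : ℕ → ℝ} {B : ℝ} (hb : ∀ n, |u n| ≤ B) :
    ∃ L, Tendsto u (U : Filter ℕ) (𝓝 L) := by
  obtain ⟨L, -, hL⟩ := (isCompact_Icc (a := -B) (b := B)).ultrafilter_le_nhds
    (U.map u) (by
      rw [le_principal_iff]
      exact Filter.mem_map.2 (Filter.univ_mem' fun n => abs_le.1 (hb n)))
  exact ⟨L, hL⟩
lemma ulim_eq {u : ℕ → ℝ} {L : ℝ} (h : Tendsto u (U : Filter ℕ) (𝓝 L)) : ulim u = L :=
  tendsto_nhds_unique (tendsto_ulim ⟨L, h⟩) h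

section Defect
variable {G : Type*} [Group G]

lemma defect_mem {ψ : G → ℝ} (hψ : IsQuasimorphism ψ) :
    ∀ g h : G, |ψ g + ψ h - ψ (g * h)| ≤ defect ψ := fun g h =>
  le_csInf hψ (fun _ hD => hD g h)

lemma defect_le {ψ : G → ℝ} {D : ℝ} (hD : ∀ g h : G, |ψ g + ψ h - ψ (g * h)| ≤ D) :
    defect ψ ≤ D :=
  csInf_le ⟨0, fun _ hD' => le_trans (abs_nonneg _) (hD' 1 1)⟩ hD

lemma defect_nonneg {ψ : G → ℝ} (hψ : IsQuasimorphism ψ) : 0 ≤ defect ψ :=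
  le_csInf hψ (fun _ hD' => le_trans (abs_nonneg _) (hD' 1 1))
end Defect
section Homog
variable {G : Type*} [Group G]

noncomputable def homog (φ : G → ℝ) (g : G) : ℝ :=
  limUnder atTop (fun n : ℕ => φ (g ^ n) / n)

variable {ψ : G → ℝ} {D : ℝ}

lemma qm_pow (hD : ∀ g h : G, |ψ g + ψ h - ψ (g * h)| ≤ D)
    (g : G) : ∀ n : ℕ, 1 ≤ n → |ψ (g ^ n) - n * ψ g| ≤ (n - 1 : ℝ) * D := by
  intro n hn
  induction n with
  | zero => omega
  | succ m ih =>
    rcases Nat.eq_or_lt_of_le hn with h1 | h1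
    · simp [← h1]
    · have hm : 1 ≤ m := by omega
      have h2 := ih hm
      have h3 := hD (g ^ m) g
      have hpow : g ^ m * g = g ^ (m + 1) := (pow_succ g m).symm
      rw [hpow] at h3
      have : |ψ (g ^ (m+1)) - (m+1 : ℕ) * ψ g| ≤ (m - 1 : ℝ) * D + D := by
        push_cast
        calc |ψ (g ^ (m+1)) - (↑m + 1) * ψ g|
            = |(ψ (g ^ m) - m * ψ g) - (ψ (g^m) + ψ g - ψ (g^(m+1)))| := by ring_nf
          _ ≤ |ψ (g ^ m) - m * ψ g| + |ψ (g^m) + ψ g - ψ (g^(m+1))| := abs_sub _ _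
          _ ≤ (m - 1 : ℝ) * D + D := add_le_add h2 h3
      calc |ψ (g ^ (m+1)) - ((m+1 : ℕ) : ℝ) * ψ g| ≤ (m - 1 : ℝ) * D + D := this
        _ = (((m+1 : ℕ) : ℝ) - 1) * D := by push_cast; ring

lemma hD_nonneg (hD : ∀ g h : G, |ψ g + ψ h - ψ (g * h)| ≤ D) : 0 ≤ D :=
  le_trans (abs_nonneg _) (hD 1 1)

-- |a_{m n} - a_m| ≤ D / m for m, n ≥ 1
lemma qm_div_est (hD : ∀ g h : G, |ψ g + ψ h - ψ (g * h)| ≤ D) (g : G)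
    {m n : ℕ} (hm : 1 ≤ m) (hn : 1 ≤ n) :
    |ψ (g ^ (m * n)) / (m * n : ℕ) - ψ (g ^ m) / m| ≤ D / m := by
  have h := qm_pow hD (g ^ m) n hn
  rw [← pow_mul] at h
  have hmpos : (0:ℝ) < m := by exact_mod_cast hm
  have hnpos : (0:ℝ) < n := by exact_mod_cast hn
  have hmn : ((m * n : ℕ) : ℝ) = (m:ℝ) * n := by push_cast; ring
  have key : ψ (g ^ (m*n)) / (m*n : ℕ) - ψ (g ^ m) / m
      = (ψ (g ^ (m*n)) - n * ψ (g ^ m)) / ((m:ℝ) * n) := by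
    rw [hmn]; field_simp
  rw [key, abs_div]
  rw [abs_of_pos (by positivity : (0:ℝ) < (m:ℝ)*n)]
  rw [div_le_div_iff₀ (by positivity) hmpos]
  calc |ψ (g ^ (m*n)) - n * ψ (g ^ m)| * m ≤ ((n:ℝ) - 1) * D * m :=
        mul_le_mul_of_nonneg_right h (le_of_lt hmpos)
    _ ≤ D * ((m:ℝ) * n) := by nlinarith [hD_nonneg hD, hmpos, hnpos]

lemma tendsto_homog (hD : ∀ g h : G, |ψ g + ψ h - ψ (g * h)| ≤ D) (g : G) :
    Tendsto (fun n : ℕ => ψ (g ^ n) / n) atTop (𝓝 (homog ψ g)) := by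
  have hcauchy : CauchySeq (fun n : ℕ => ψ (g ^ n) / n) := by
    rw [Metric.cauchySeq_iff']
    intro ε hε
    obtain ⟨N0, hN0⟩ := exists_nat_gt (2 * D / ε)
    refine ⟨max N0 1, fun n hn => ?_⟩
    set N := max N0 1
    have hN1 : 1 ≤ N := le_max_right _ _
    have hn1 : 1 ≤ n := le_trans hN1 hn
    have e1 := qm_div_est hD g hn1 hN1
    have e2 := qm_div_est hD g hN1 hn1
    rw [Nat.mul_comm] at e2
    have hNpos : (0:ℝ) < N := by exact_mod_cast hN1
    have hnpos : (0:ℝ) < n := by exact_mod_cast hn1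
    have hD0 := hD_nonneg hD
    have hNR : 2 * D / ε < N := lt_of_lt_of_le hN0 (by exact_mod_cast le_max_left N0 1)
    have h2D : 2 * D < ε * N := by
      rw [div_lt_iff₀ hε] at hNR; linarith
    rw [Real.dist_eq]
    have : |ψ (g ^ n) / n - ψ (g ^ N) / N| ≤ D / n + D / N := by
      calc |ψ (g ^ n) / n - ψ (g ^ N) / N|
          = |(ψ (g ^ n) / n - ψ (g ^ (n*N)) / (n*N : ℕ)) + (ψ (g ^ (n*N)) / (n*N : ℕ) - ψ (g ^ N) / N)| := by ring_nf
        _ ≤ |ψ (g ^ n) / n - ψ (g ^ (n*N)) / (n*N : ℕ)| + |ψ (g ^ (n*N)) / (n*N : ℕ) - ψ (g ^ N) / N| := abs_add_le _ _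
        _ ≤ D / n + D / N := by
            rw [abs_sub_comm]
            exact add_le_add e1 e2
    have hfin : D / n + D / N < ε := by
      have h1 : D / n ≤ D / N := by
        apply div_le_div_of_nonneg_left hD0 hNpos
        exact_mod_cast hn
      have h2 : D / N + D / N < ε := by
        rw [← add_div, div_lt_iff₀ hNpos]; linarith
      linarith
    exact lt_of_le_of_lt this hfin
  obtain ⟨L, hL⟩ := cauchySeq_tendsto_of_complete hcauchy
  rwa [homog, hL.limUnder_eq]

lemma homog_sub_le (hD : ∀ g h : G, |ψ g + ψ h - ψ (g * h)| ≤ D) (g : G) :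
    |ψ g - homog ψ g| ≤ D := by
  have h : ∀ n : ℕ, 1 ≤ n → |ψ (g ^ n) / n - ψ g| ≤ D := by
    intro n hn
    have := qm_pow hD g n hn
    have hnpos : (0:ℝ) < n := by exact_mod_cast hn
    have key : ψ (g ^ n) / n - ψ g = (ψ (g ^ n) - n * ψ g) / n := by field_simp
    rw [key, abs_div, abs_of_pos hnpos, div_le_iff₀ hnpos]
    calc |ψ (g ^ n) - n * ψ g| ≤ ((n:ℝ) - 1) * D := this
      _ ≤ D * n := by nlinarith [hD_nonneg hD]
  have habs : Tendsto (fun n : ℕ => |ψ (g ^ n) / n - ψ g|) atTop (𝓝 (|homog ψ g - ψ g|)) :=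
    ((tendsto_homog hD g).sub_const (ψ g)).abs
  have hle : |homog ψ g - ψ g| ≤ D :=
    le_of_tendsto habs (Filter.eventually_atTop.2 ⟨1, fun n hn => h n hn⟩)
  rwa [abs_sub_comm]

lemma homog_eq_of_bdd {ψ' : G → ℝ} {C : ℝ} (hD : ∀ g h : G, |ψ g + ψ h - ψ (g * h)| ≤ D)
    {D' : ℝ} (hD' : ∀ g h : G, |ψ' g + ψ' h - ψ' (g * h)| ≤ D')
    (hC : ∀ g, |ψ g - ψ' g| ≤ C) (g : G) : homog ψ g = homog ψ' g := by
  have h1 := tendsto_homog hD g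
  have h2 := tendsto_homog hD' g
  have h3 : Tendsto (fun n : ℕ => ψ (g ^ n) / n - ψ' (g ^ n) / n) atTop (𝓝 0) := by
    refine squeeze_zero_norm (fun n => ?_) (tendsto_const_div_atTop_nhds_zero_nat C)
    rcases Nat.eq_zero_or_pos n with h | h
    · subst h; simp
    · have hnpos : (0:ℝ) < n := by exact_mod_cast h
      rw [Real.norm_eq_abs, div_sub_div_same, abs_div, abs_of_pos hnpos, div_le_div_iff₀ hnpos hnpos]
      have := hC (g ^ n)
      nlinarith [abs_nonneg (ψ (g^n) - ψ' (g^n)), hnpos]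
  have : Tendsto (fun n : ℕ => ψ (g ^ n) / n) atTop (𝓝 (homog ψ' g)) := by
    have := h3.add h2
    simpa using this
  exact tendsto_nhds_unique h1 this

lemma homog_one (hD : ∀ g h : G, |ψ g + ψ h - ψ (g * h)| ≤ D) : homog ψ 1 = 0 := by
  have : Tendsto (fun n : ℕ => ψ ((1:G) ^ n) / n) atTop (𝓝 0) := by
    simp only [one_pow]
    exact tendsto_const_div_atTop_nhds_zero_nat (ψ 1)
  exact tendsto_nhds_unique (tendsto_homog hD 1) this

lemma homog_pow (hD : ∀ g h : G, |ψ g + ψ h - ψ (g * h)| ≤ D) (g : G) (m : ℕ) :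
    homog ψ (g ^ m) = m * homog ψ g := by
  rcases Nat.eq_zero_or_pos m with hm | hm
  · subst hm; simp [homog_one hD]
  have hmap : Tendsto (fun n : ℕ => m * n) atTop atTop :=
    Tendsto.comp (tendsto_id.const_mul_atTop' hm) tendsto_id
  have h1 : Tendsto (fun n : ℕ => ψ (g ^ (m * n)) / ((m * n : ℕ) : ℝ)) atTop (𝓝 (homog ψ g)) :=
    (tendsto_homog hD g).comp hmap
  have h2 : Tendsto (fun n : ℕ => ψ ((g ^ m) ^ n) / n) atTop (𝓝 (m * homog ψ g)) := by
    have := h1.const_mul (m : ℝ)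
    apply this.congr'
    filter_upwards [Filter.eventually_gt_atTop 0] with n hn
    rw [← pow_mul]
    have hnpos : (0:ℝ) < n := by exact_mod_cast hn
    have hmpos : (0:ℝ) < m := by exact_mod_cast hm
    push_cast
    field_simp
  exact tendsto_nhds_unique (tendsto_homog hD (g ^ m)) h2

lemma homog_inv (hD : ∀ g h : G, |ψ g + ψ h - ψ (g * h)| ≤ D) (g : G) :
    homog ψ g⁻¹ = - homog ψ g := by
  have key : Tendsto (fun n : ℕ => ψ (g⁻¹ ^ n) / n + ψ (g ^ n) / n) atTop (𝓝 0) := by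
    refine squeeze_zero_norm (fun n => ?_) (tendsto_const_div_atTop_nhds_zero_nat (D + |ψ 1|))
    rcases Nat.eq_zero_or_pos n with h | h
    · subst h; simp
    · have hnpos : (0:ℝ) < n := by exact_mod_cast h
      have hb := hD (g ^ n) (g⁻¹ ^ n)
      rw [inv_pow] at hb ⊢
      rw [mul_inv_cancel] at hb
      rw [Real.norm_eq_abs]
      have : ψ ((g ^ n)⁻¹) / n + ψ (g ^ n) / n = (ψ (g ^ n) + ψ ((g^n)⁻¹)) / n := by ring
      rw [this, abs_div, abs_of_pos hnpos, div_le_div_iff₀ hnpos hnpos]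
      have h2 : |ψ (g ^ n) + ψ ((g^n)⁻¹)| ≤ D + |ψ 1| := by
        calc |ψ (g ^ n) + ψ ((g^n)⁻¹)| = |(ψ (g ^ n) + ψ ((g^n)⁻¹) - ψ 1) + ψ 1| := by ring_nf
          _ ≤ |ψ (g ^ n) + ψ ((g^n)⁻¹) - ψ 1| + |ψ 1| := abs_add_le _ _
          _ ≤ D + |ψ 1| := add_le_add hb le_rfl
      nlinarith [abs_nonneg (ψ (g ^ n) + ψ ((g^n)⁻¹)), hnpos]
  have h2 : Tendsto (fun n : ℕ => ψ (g⁻¹ ^ n) / n) atTop (𝓝 (- homog ψ g)) := by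
    have := key.sub (tendsto_homog hD g)
    simpa using this
  exact tendsto_nhds_unique (tendsto_homog hD g⁻¹) h2
end Homog
section Mean
variable {G : Type*} [Group G] [DecidableEq G] {H : Subgroup G} {F : ℕ → Finset G}

noncomputable def avg (F : ℕ → Finset G) (f : G → ℝ) (k : ℕ) : ℝ :=
  (∑ y ∈ F k, f y) / ((F k).card : ℝ)

noncomputable def mean (F : ℕ → Finset G) (f : G → ℝ) : ℝ := ulim (avg F f)

variable (hF : IsSymmetricFolnerSeq H F)
include hF

lemma memH {k : ℕ} {x : G} (hx : x ∈ F k) : x ∈ H := hF.1 k hx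

omit hF in
lemma bound_nonneg {f : G → ℝ} {B : ℝ} (hb : ∀ x, |f x| ≤ B) : 0 ≤ B :=
  le_trans (abs_nonneg _) (hb 1)

omit hF in
lemma avg_abs_le {f : G → ℝ} {B : ℝ} (hb : ∀ x, |f x| ≤ B) (k : ℕ) :
    |avg F f k| ≤ B := by
  have hB : 0 ≤ B := bound_nonneg hb
  rcases Finset.eq_empty_or_nonempty (F k) with h | h
  · simp [avg, h, hB]
  · have hc : (0:ℝ) < (F k).card := by exact_mod_cast Finset.card_pos.2 h
    rw [avg, abs_div, abs_of_pos hc, div_le_iff₀ hc]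
    calc |∑ y ∈ F k, f y| ≤ ∑ y ∈ F k, |f y| := Finset.abs_sum_le_sum_abs _ _
      _ ≤ ∑ _y ∈ F k, B := Finset.sum_le_sum (fun y _ => hb y)
      _ = (F k).card * B := by rw [Finset.sum_const, nsmul_eq_mul]
      _ = B * (F k).card := by ring

omit hF in
lemma mean_tendsto {f : G → ℝ} {B : ℝ} (hb : ∀ x, |f x| ≤ B) :
    Tendsto (avg F f) (U : Filter ℕ) (𝓝 (mean F f)) :=
  tendsto_ulim (exists_lim_of_bdd (fun k => avg_abs_le hb k))

omit hF in
lemma mean_bound {f : G → ℝ} {B : ℝ} (hb : ∀ x, |f x| ≤ B) : |mean F f| ≤ B :=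
  le_of_tendsto' (mean_tendsto hb).abs (fun k => avg_abs_le hb k)

lemma mean_congr {f g : G → ℝ} (h : ∀ x ∈ H, f x = g x) : mean F f = mean F g := by
  unfold mean avg
  congr 1
  funext k
  congr 1
  exact Finset.sum_congr rfl (fun x hx => h x (memH hF hx))

lemma eventually_nonempty : ∀ᶠ k in atTop, (F k).Nonempty := by
  obtain ⟨K, hK⟩ := hF.2.2.2.1 1 (one_mem H)
  have mono : Monotone F := monotone_nat_of_le_succ hF.2.1
  exact Filter.eventually_atTop.2 ⟨K, fun k hk => ⟨1, mono hk hK⟩⟩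

lemma mean_const (c : ℝ) : mean F (fun _ => c) = c := by
  apply ulim_eq
  apply Tendsto.congr' (f₁ := fun _ => c) _ tendsto_const_nhds
  apply Filter.Eventually.filter_mono U_le_atTop
  filter_upwards [eventually_nonempty hF] with k hk
  have hc : ((F k).card : ℝ) ≠ 0 := Nat.cast_ne_zero.2 (Finset.card_ne_zero.2 hk)
  rw [avg, Finset.sum_const, nsmul_eq_mul]
  field_simp

omit hF in
lemma avg_add (f g : G → ℝ) (k : ℕ) :
    avg F (fun x => f x + g x) k = avg F f k + avg F g k := by
  rw [avg, avg, avg, Finset.sum_add_distrib, add_div]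

omit hF in
lemma mean_add {f g : G → ℝ} {B1 B2 : ℝ} (hf : ∀ x, |f x| ≤ B1) (hg : ∀ x, |g x| ≤ B2) :
    mean F (fun x => f x + g x) = mean F f + mean F g := by
  apply ulim_eq
  have h1 : Tendsto (fun k => avg F f k + avg F g k) (U : Filter ℕ) (𝓝 (mean F f + mean F g)) :=
    Tendsto.add (mean_tendsto hf) (mean_tendsto hg)
  apply h1.congr
  intro k
  exact (avg_add f g k).symm

omit hF in
lemma mean_neg {f : G → ℝ} {B : ℝ} (hf : ∀ x, |f x| ≤ B) :
    mean F (fun x => -(f x)) = - mean F f := by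
  apply ulim_eq
  have h1 : Tendsto (fun k => -(avg F f k)) (U : Filter ℕ) (𝓝 (-(mean F f))) :=
    Tendsto.neg (mean_tendsto hf)
  apply h1.congr
  intro k
  rw [avg, avg, Finset.sum_neg_distrib, neg_div]

omit hF in
lemma mean_sub {f g : G → ℝ} {B1 B2 : ℝ} (hf : ∀ x, |f x| ≤ B1) (hg : ∀ x, |g x| ≤ B2) :
    mean F (fun x => f x - g x) = mean F f - mean F g := by
  have h1 : ∀ x, |-(g x)| ≤ B2 := fun x => by rw [abs_neg]; exact hg x
  rw [show (fun x => f x - g x) = (fun x => f x + -(g x)) by funext x; ring,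
    mean_add hf h1, mean_neg hg]
  ring

lemma mean_inv (f : G → ℝ) : mean F (fun x => f x⁻¹) = mean F f := by
  unfold mean avg
  congr 1
  funext k
  congr 1
  apply Finset.sum_nbij' (i := fun y => y⁻¹) (j := fun y => y⁻¹)
  · intro a ha; exact (hF.2.2.1 k a).1 ha
  · intro a ha; exact (hF.2.2.1 k a).1 ha
  · intro a _; simp
  · intro a _; simp
  · intro a _; rfl

lemma mean_left {f : G → ℝ} {B : ℝ} {h : G} (hh : h ∈ H) (hb : ∀ x, |f x| ≤ B) :
    mean F (fun x => f (h * x)) = mean F f := by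
  have hB : 0 ≤ B := bound_nonneg hb
  have key : ∀ k, |avg F (fun x => f (h * x)) k - avg F f k| ≤
      B * (((symmDiff ((F k).image (fun x => h * x)) (F k)).card : ℝ) / ((F k).card : ℝ)) := by
    intro k
    set A := (F k).image (fun x => h * x) with hA
    have hsum : ∑ y ∈ F k, f (h * y) = ∑ z ∈ A, f z := by
      rw [hA, Finset.sum_image (fun x _ y _ hxy => mul_left_cancel hxy)]
    have hdiff : ∑ z ∈ A, f z - ∑ y ∈ F k, f y
        = ∑ z ∈ A \ F k, f z - ∑ y ∈ F k \ A, f y := by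
      have h1 : ∑ z ∈ A \ F k, f z + ∑ z ∈ A ∩ F k, f z = ∑ z ∈ A, f z := by
        rw [← Finset.sum_union (Finset.disjoint_sdiff_inter A (F k))]
        congr 1
        exact Finset.sdiff_union_inter A (F k)
      have h2 : ∑ z ∈ F k \ A, f z + ∑ z ∈ F k ∩ A, f z = ∑ z ∈ F k, f z := by
        rw [← Finset.sum_union (Finset.disjoint_sdiff_inter (F k) A)]
        congr 1
        exact Finset.sdiff_union_inter (F k) A
      rw [← h1, ← h2, Finset.inter_comm]
      ring
    have hcardsymm : (symmDiff A (F k)).card = (A \ F k).card + (F k \ A).card := by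
      rw [symmDiff_def]
      exact Finset.card_union_of_disjoint (disjoint_sdiff_sdiff)
    have habs : |∑ z ∈ A, f z - ∑ y ∈ F k, f y| ≤ B * (symmDiff A (F k)).card := by
      rw [hdiff]
      calc |∑ z ∈ A \ F k, f z - ∑ y ∈ F k \ A, f y|
          ≤ |∑ z ∈ A \ F k, f z| + |∑ y ∈ F k \ A, f y| := abs_sub _ _
        _ ≤ (∑ z ∈ A \ F k, |f z|) + ∑ y ∈ F k \ A, |f y| :=
            add_le_add (Finset.abs_sum_le_sum_abs _ _) (Finset.abs_sum_le_sum_abs _ _)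
        _ ≤ (∑ _z ∈ A \ F k, B) + ∑ _y ∈ F k \ A, B :=
            add_le_add (Finset.sum_le_sum fun y _ => hb y) (Finset.sum_le_sum fun y _ => hb y)
        _ = B * (symmDiff A (F k)).card := by
            rw [Finset.sum_const, Finset.sum_const, nsmul_eq_mul, nsmul_eq_mul, hcardsymm]
            push_cast; ring
    rcases Finset.eq_empty_or_nonempty (F k) with hemp | hne
    · simp [avg, hemp, hA]
    · have hc : (0:ℝ) < (F k).card := by exact_mod_cast Finset.card_pos.2 hne
      have : avg F (fun x => f (h * x)) k - avg F f k
          = (∑ z ∈ A, f z - ∑ y ∈ F k, f y) / (F k).card := by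
        rw [avg, avg, hsum, sub_div]
      rw [this, abs_div, abs_of_pos hc, ← mul_div_assoc]
      gcongr
  have hzero : Tendsto (fun k => avg F (fun x => f (h * x)) k - avg F f k) atTop (𝓝 0) := by
    refine squeeze_zero_norm (fun k => key k) ?_
    have h0 := (hF.2.2.2.2 h hh).const_mul B
    rw [mul_zero] at h0
    exact h0
  apply ulim_eq
  have h1 : Tendsto (avg F f) (U : Filter ℕ) (𝓝 (mean F f)) := mean_tendsto hb
  have hz2 : Tendsto (fun k => avg F (fun x => f (h * x)) k - avg F f k) (U : Filter ℕ) (𝓝 0) :=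
    hzero.mono_left U_le_atTop
  have h2 := hz2.add h1
  rw [zero_add] at h2
  exact h2.congr (fun k => by ring)

lemma mean_right {f : G → ℝ} {B : ℝ} {h : G} (hh : h ∈ H) (hb : ∀ x, |f x| ≤ B) :
    mean F (fun x => f (x * h)) = mean F f := by
  have hq : ∀ x : G, |f x⁻¹| ≤ B := fun x => hb x⁻¹
  have e1 : mean F (fun x : G => (fun z : G => f (z * h)) x⁻¹) = mean F (fun z : G => f (z * h)) :=
    mean_inv hF (fun z : G => f (z * h))
  have e2 : (fun x : G => (fun z : G => f (z * h)) x⁻¹) = (fun x : G => (fun y : G => f y⁻¹) (h⁻¹ * x)) := by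
    funext x
    show f (x⁻¹ * h) = f ((h⁻¹ * x)⁻¹)
    rw [mul_inv_rev, inv_inv]
  have e3 : mean F (fun x : G => (fun y : G => f y⁻¹) (h⁻¹ * x)) = mean F (fun y : G => f y⁻¹) :=
    mean_left (f := fun y : G => f y⁻¹) (h := h⁻¹) hF (inv_mem hh) hq
  have e4 : mean F (fun y : G => f y⁻¹) = mean F f := mean_inv hF f
  exact e1.symm.trans ((congrArg (mean F) e2).trans (e3.trans e4))
end Mean

section Main
variable {G : Type*} [Group G] [DecidableEq G] {H : Subgroup G} {F : ℕ → Finset G}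
variable {φ : G → ℝ} {D : ℝ}

lemma homog_defect (hD : ∀ g h : G, |φ g + φ h - φ (g * h)| ≤ D) :
    ∀ g h : G, |homog φ g + homog φ h - homog φ (g * h)| ≤ 4 * D := by
  intro g h
  obtain ⟨a1, a2⟩ := abs_le.1 (homog_sub_le hD g)
  obtain ⟨b1, b2⟩ := abs_le.1 (homog_sub_le hD h)
  obtain ⟨c1, c2⟩ := abs_le.1 (homog_sub_le hD (g * h))
  obtain ⟨d1, d2⟩ := abs_le.1 (hD g h)
  rw [abs_le]
  constructor <;> linarith

lemma homog_hom_H (hF : IsSymmetricFolnerSeq H F)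
    (hD : ∀ g h : G, |φ g + φ h - φ (g * h)| ≤ D)
    {a b : G} (ha : a ∈ H) (hb : b ∈ H) :
    homog φ (a * b) = homog φ a + homog φ b := by
  have hDb := homog_defect hD
  have hDb0 : 0 ≤ 4 * D := by have := hD_nonneg hD; linarith
  set φb : G → ℝ := homog φ with hφbdef
  set q : G → G → ℝ := fun c x => φb (c * x) - φb x with hq
  set l : G → ℝ := fun c => mean F (q c) with hl
  have hbd : ∀ c x : G, |q c x - φb c| ≤ 4 * D := by
    intro c x
    have h1 : q c x - φb c = -(φb c + φb x - φb (c * x)) := by rw [hq]; ring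
    rw [h1, abs_neg]
    exact hDb c x
  have hbd2 : ∀ c x : G, |q c x| ≤ 4 * D + |φb c| := by
    intro c x
    calc |q c x| = |(q c x - φb c) + φb c| := by ring_nf
      _ ≤ |q c x - φb c| + |φb c| := abs_add_le _ _
      _ ≤ 4 * D + |φb c| := add_le_add (hbd c x) le_rfl
  have ladd : ∀ c ∈ H, ∀ d ∈ H, l (c * d) = l c + l d := by
    intro c hc d hd
    have e0 : q (c * d) = fun x => (fun y => q c y) (d * x) + q d x := by
      funext x
      show φb (c * d * x) - φb x = (φb (c * (d * x)) - φb (d * x)) + (φb (d * x) - φb x)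
      rw [mul_assoc]; ring
    have e1 : mean F (q (c * d)) = mean F (fun x => (fun y => q c y) (d * x)) + mean F (q d) := by
      rw [e0]
      exact mean_add (fun x => hbd2 c (d * x)) (fun x => hbd2 d x)
    have e2 : mean F (fun x => (fun y => q c y) (d * x)) = mean F (q c) :=
      mean_left (f := q c) (h := d) hF hd (hbd2 c)
    show mean F (q (c * d)) = mean F (q c) + mean F (q d)
    rw [e1, e2]
  have lpow : ∀ c ∈ H, ∀ n : ℕ, 1 ≤ n → l (c ^ n) = n * l c := by
    intro c hc n hn
    induction n with
    | zero => omega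
    | succ m ih =>
      rcases Nat.eq_or_lt_of_le hn with h1 | h1
      · rw [← h1]; simp
      · have hm : 1 ≤ m := by omega
        rw [pow_succ, ladd (c ^ m) (pow_mem hc m) c hc, ih hm]
        push_cast; ring
  have lclose : ∀ c : G, |l c - φb c| ≤ 4 * D := by
    intro c
    have e : mean F (fun x => q c x - φb c) = l c - φb c := by
      rw [mean_sub (hbd2 c) (fun x => le_of_eq (rfl : |φb c| = |φb c|)), mean_const hF]
    rw [← e]
    exact mean_bound (fun x => hbd c x)
  have heq : ∀ c ∈ H, φb c = l c := by
    intro c hc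
    have key : ∀ n : ℕ, 1 ≤ n → |φb c - l c| ≤ (4 * D) / n := by
      intro n hn
      have hnpos : (0:ℝ) < n := by exact_mod_cast hn
      have h1 : φb (c ^ n) = n * φb c := homog_pow hD c n
      have h2 := lpow c hc n hn
      have h3 := lclose (c ^ n)
      rw [h1, h2] at h3
      have h4 : l (c ^ n) - φb (c ^ n) = -((n:ℝ) * (φb c - l c)) := by rw [h1, h2]; ring
      have h5 : |(n:ℝ) * (φb c - l c)| ≤ 4 * D := by
        rw [← abs_neg, ← h4]
        exact lclose (c ^ n)
      rw [abs_mul, abs_of_pos hnpos] at h5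
      rw [le_div_iff₀ hnpos]
      linarith
    have h6 : |φb c - l c| ≤ 0 := by
      apply ge_of_tendsto (tendsto_const_div_atTop_nhds_zero_nat (4 * D))
      exact Filter.eventually_atTop.2 ⟨1, fun n hn => key n hn⟩
    have h7 : φb c - l c = 0 := by
      have := abs_nonneg (φb c - l c)
      have : |φb c - l c| = 0 := le_antisymm h6 this
      exact abs_eq_zero.1 this
    linarith
  rw [show φb (a * b) = φb (a * b) from rfl] at *
  rw [heq (a * b) (mul_mem ha hb), heq a ha, heq b hb]
  exact ladd a ha b hb

noncomputable def Qf (F : ℕ → Finset G) (φ ψ : G → ℝ) (g x : G) : ℝ :=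
  mean F (fun y => ψ (x * g * y) - homog φ x - homog φ y)

noncomputable def Jop (F : ℕ → Finset G) (φ ψ : G → ℝ) (g : G) : ℝ :=
  mean F (fun x => Qf F φ ψ g x)

variable {ψ : G → ℝ} {C : ℝ}

lemma P_bd (hD : ∀ g h : G, |φ g + φ h - φ (g * h)| ≤ D)
    (hC : ∀ g, |ψ g - homog φ g| ≤ C) :
    ∀ g x y : G, |ψ (x * g * y) - homog φ x - homog φ y - homog φ g| ≤ C + 8 * D := by
  intro g x y
  have hDb := homog_defect hD
  obtain ⟨a1, a2⟩ := abs_le.1 (hC (x * g * y))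
  obtain ⟨b1, b2⟩ := abs_le.1 (hDb (x * g) y)
  obtain ⟨c1, c2⟩ := abs_le.1 (hDb x g)
  rw [abs_le]
  constructor <;> linarith

lemma P_bd' (hD : ∀ g h : G, |φ g + φ h - φ (g * h)| ≤ D)
    (hC : ∀ g, |ψ g - homog φ g| ≤ C) :
    ∀ g x y : G, |ψ (x * g * y) - homog φ x - homog φ y| ≤ C + 8 * D + |homog φ g| := by
  intro g x y
  have h1 := P_bd hD hC g x y
  calc |ψ (x * g * y) - homog φ x - homog φ y|
      = |(ψ (x * g * y) - homog φ x - homog φ y - homog φ g) + homog φ g| := by ring_nf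
    _ ≤ |ψ (x * g * y) - homog φ x - homog φ y - homog φ g| + |homog φ g| := abs_add_le _ _
    _ ≤ C + 8 * D + |homog φ g| := add_le_add h1 le_rfl

lemma Q_bd (hD : ∀ g h : G, |φ g + φ h - φ (g * h)| ≤ D)
    (hC : ∀ g, |ψ g - homog φ g| ≤ C) (hF : IsSymmetricFolnerSeq H F) :
    ∀ g x : G, |Qf F φ ψ g x - homog φ g| ≤ C + 8 * D := by
  intro g x
  have e : mean F (fun y => (ψ (x * g * y) - homog φ x - homog φ y) - homog φ g)
      = Qf F φ ψ g x - homog φ g := by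
    rw [mean_sub (P_bd' hD hC g x) (fun y => le_of_eq (rfl : |homog φ g| = |homog φ g|)),
      mean_const hF]
    rfl
  rw [← e]
  exact mean_bound (fun y => P_bd hD hC g x y)

lemma Q_bd' (hD : ∀ g h : G, |φ g + φ h - φ (g * h)| ≤ D)
    (hC : ∀ g, |ψ g - homog φ g| ≤ C) (hF : IsSymmetricFolnerSeq H F) :
    ∀ g x : G, |Qf F φ ψ g x| ≤ C + 8 * D + |homog φ g| := by
  intro g x
  calc |Qf F φ ψ g x| = |(Qf F φ ψ g x - homog φ g) + homog φ g| := by ring_nf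
    _ ≤ |Qf F φ ψ g x - homog φ g| + |homog φ g| := abs_add_le _ _
    _ ≤ C + 8 * D + |homog φ g| := add_le_add (Q_bd hD hC hF g x) le_rfl

lemma J_dist (hD : ∀ g h : G, |φ g + φ h - φ (g * h)| ≤ D)
    (hC : ∀ g, |ψ g - homog φ g| ≤ C) (hF : IsSymmetricFolnerSeq H F) :
    ∀ g : G, |Jop F φ ψ g - homog φ g| ≤ C + 8 * D := by
  intro g
  have e : mean F (fun x => Qf F φ ψ g x - homog φ g) = Jop F φ ψ g - homog φ g := by
    rw [mean_sub (Q_bd' hD hC hF g) (fun y => le_of_eq (rfl : |homog φ g| = |homog φ g|)),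
      mean_const hF]
    rfl
  rw [← e]
  exact mean_bound (fun x => Q_bd hD hC hF g x)

lemma J_right (hF : IsSymmetricFolnerSeq H F)
    (hD : ∀ g h : G, |φ g + φ h - φ (g * h)| ≤ D)
    (hC : ∀ g, |ψ g - homog φ g| ≤ C) {h : G} (hh : h ∈ H) (g : G) :
    Jop F φ ψ (g * h) = Jop F φ ψ g + homog φ h := by
  have inner : ∀ x : G, Qf F φ ψ (g * h) x = Qf F φ ψ g x + homog φ h := by
    intro x
    have e0 : mean F (fun y => ψ (x * (g * h) * y) - homog φ x - homog φ y)
        = mean F (fun y => (fun y' => ψ (x * g * y') - homog φ x - homog φ y') (h * y)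
            + homog φ h) := by
      apply mean_congr hF
      intro y hy
      show ψ (x * (g * h) * y) - homog φ x - homog φ y
          = (ψ (x * g * (h * y)) - homog φ x - homog φ (h * y)) + homog φ h
      have hmul : x * (g * h) * y = x * g * (h * y) := by group
      rw [hmul, homog_hom_H hF hD hh hy]
      ring
    have e1 : mean F (fun y => (fun y' => ψ (x * g * y') - homog φ x - homog φ y') (h * y)
          + homog φ h)
        = mean F (fun y => (fun y' => ψ (x * g * y') - homog φ x - homog φ y') (h * y))
          + homog φ h := by
      rw [mean_add (fun y => P_bd' hD hC g x (h * y))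
        (fun y : G => le_of_eq (rfl : |homog φ h| = |homog φ h|)), mean_const hF]
    have e2 : mean F (fun y => (fun y' => ψ (x * g * y') - homog φ x - homog φ y') (h * y))
        = mean F (fun y' => ψ (x * g * y') - homog φ x - homog φ y') :=
      mean_left (f := fun y' => ψ (x * g * y') - homog φ x - homog φ y') (h := h) hF hh
        (fun y => P_bd' hD hC g x y)
    show mean F (fun y => ψ (x * (g * h) * y) - homog φ x - homog φ y) = _
    rw [e0, e1, e2]
    rfl
  have outer : Jop F φ ψ (g * h) = mean F (fun x => Qf F φ ψ g x + homog φ h) := by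
    show mean F (fun x => Qf F φ ψ (g * h) x) = _
    congr 1
    funext x
    exact inner x
  rw [outer, mean_add (Q_bd' hD hC hF g)
    (fun x : G => le_of_eq (rfl : |homog φ h| = |homog φ h|)), mean_const hF]
  rfl

lemma J_left (hF : IsSymmetricFolnerSeq H F)
    (hD : ∀ g h : G, |φ g + φ h - φ (g * h)| ≤ D)
    (hC : ∀ g, |ψ g - homog φ g| ≤ C) {h : G} (hh : h ∈ H) (g : G) :
    Jop F φ ψ (h * g) = Jop F φ ψ g + homog φ h := by
  have inner : ∀ x ∈ H, Qf F φ ψ (h * g) x = (fun x' => Qf F φ ψ g x') (x * h) + homog φ h := by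
    intro x hx
    have e0 : (fun y => ψ (x * (h * g) * y) - homog φ x - homog φ y)
        = (fun y => (ψ ((x * h) * g * y) - homog φ (x * h) - homog φ y) + homog φ h) := by
      funext y
      have hmul : x * (h * g) * y = (x * h) * g * y := by group
      rw [hmul, homog_hom_H hF hD hx hh]
      ring
    show mean F (fun y => ψ (x * (h * g) * y) - homog φ x - homog φ y) = _
    rw [e0, mean_add (fun y => P_bd' hD hC g (x * h) y)
      (fun y : G => le_of_eq (rfl : |homog φ h| = |homog φ h|)), mean_const hF]
    rfl
  have outer : Jop F φ ψ (h * g) = mean F (fun x => (fun x' => Qf F φ ψ g x') (x * h)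
      + homog φ h) := mean_congr hF inner
  rw [outer, mean_add (fun x => Q_bd' hD hC hF g (x * h))
    (fun x : G => le_of_eq (rfl : |homog φ h| = |homog φ h|)), mean_const hF,
    mean_right (f := fun x' => Qf F φ ψ g x') (h := h) hF hh (Q_bd' hD hC hF g)]
  rfl

lemma J_one (hF : IsSymmetricFolnerSeq H F)
    (hD : ∀ g h : G, |φ g + φ h - φ (g * h)| ≤ D)
    (hC : ∀ g, |ψ g - homog φ g| ≤ C)
    (hanti : ∀ g : G, ψ g⁻¹ = -ψ g) :
    Jop F φ ψ 1 = 0 := by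
  set w : G → ℝ := fun z => ψ z - homog φ z with hw
  have hwb : ∀ z : G, |w z| ≤ C := fun z => hC z
  set μ : ℝ := mean F w with hμ
  have step1 : ∀ x ∈ H, Qf F φ ψ 1 x = μ := by
    intro x hx
    have e0 : mean F (fun y => ψ (x * 1 * y) - homog φ x - homog φ y)
        = mean F (fun y => w (x * y)) := by
      apply mean_congr hF
      intro y hy
      show ψ (x * 1 * y) - homog φ x - homog φ y = ψ (x * y) - homog φ (x * y)
      rw [mul_one, homog_hom_H hF hD hx hy]
      ring
    have e1 : mean F (fun y => w (x * y)) = mean F w :=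
      mean_left (f := w) (h := x) hF hx hwb
    show mean F (fun y => ψ (x * 1 * y) - homog φ x - homog φ y) = μ
    rw [e0, e1]
  have step2 : Jop F φ ψ 1 = μ := by
    have := mean_congr hF (f := fun x => Qf F φ ψ 1 x) (g := fun _ => μ) step1
    rw [Jop, this, mean_const hF]
  have step3 : μ = -μ := by
    have e2 : mean F (fun y => w y⁻¹) = mean F w := mean_inv hF w
    have e3 : (fun y : G => w y⁻¹) = (fun y => -(w y)) := by
      funext y
      show ψ y⁻¹ - homog φ y⁻¹ = -(ψ y - homog φ y)
      rw [hanti y, homog_inv hD y]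
      ring
    have e4 : mean F (fun y => -(w y)) = -mean F w := mean_neg hwb
    rw [hμ]
    calc mean F w = mean F (fun y => w y⁻¹) := e2.symm
      _ = mean F (fun y => -(w y)) := by rw [e3]
      _ = -(mean F w) := e4
  rw [step2]
  linarith [step3]

lemma J_defect (hF : IsSymmetricFolnerSeq H F)
    (hD : ∀ g h : G, |φ g + φ h - φ (g * h)| ≤ D)
    (hC : ∀ g, |ψ g - homog φ g| ≤ C)
    {Dψ : ℝ} (hDψ : ∀ g h : G, |ψ g + ψ h - ψ (g * h)| ≤ Dψ) :
    ∀ g g' : G, |Jop F φ ψ g + Jop F φ ψ g' - Jop F φ ψ (g * g')| ≤ Dψ := by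
  intro g g'
  set φb : G → ℝ := homog φ with hφbdef
  set T : G → G → G → ℝ := fun x y z =>
    (ψ (x * g * y) - φb x - φb y) + (ψ (y⁻¹ * g' * z) - φb y⁻¹ - φb z)
      - (ψ (x * (g * g') * z) - φb x - φb z) with hT
  have Tbd : ∀ x y z : G, |T x y z| ≤ Dψ := by
    intro x y z
    have hmul : (x * g * y) * (y⁻¹ * g' * z) = x * (g * g') * z := by group
    have hinv : φb y⁻¹ = -φb y := homog_inv hD y
    have h1 := hDψ (x * g * y) (y⁻¹ * g' * z)
    rw [hmul] at h1
    have h2 : T x y z = ψ (x * g * y) + ψ (y⁻¹ * g' * z) - ψ (x * (g * g') * z) := by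
      rw [hT]
      show (ψ (x * g * y) - φb x - φb y) + (ψ (y⁻¹ * g' * z) - φb y⁻¹ - φb z)
          - (ψ (x * (g * g') * z) - φb x - φb z) = _
      rw [hinv]; ring
    rw [h2]
    exact h1
  have step_z : ∀ x y : G, mean F (T x y)
      = (ψ (x * g * y) - φb x - φb y) + Qf F φ ψ g' y⁻¹ - Qf F φ ψ (g * g') x := by
    intro x y
    have e0 : T x y = fun z => ((ψ (x * g * y) - φb x - φb y)
        + (ψ (y⁻¹ * g' * z) - φb y⁻¹ - φb z)) - (ψ (x * (g * g') * z) - φb x - φb z) := by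
      funext z; rw [hT]
    have b1 : ∀ z : G, |(ψ (x * g * y) - φb x - φb y) + (ψ (y⁻¹ * g' * z) - φb y⁻¹ - φb z)|
        ≤ |ψ (x * g * y) - φb x - φb y| + (C + 8 * D + |φb g'|) :=
      fun z => le_trans (abs_add_le _ _) (add_le_add le_rfl (P_bd' hD hC g' y⁻¹ z))
    have e1 : mean F (T x y) = mean F (fun z => (ψ (x * g * y) - φb x - φb y)
          + (ψ (y⁻¹ * g' * z) - φb y⁻¹ - φb z))
        - mean F (fun z => ψ (x * (g * g') * z) - φb x - φb z) := by
      rw [e0]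
      exact mean_sub b1 (P_bd' hD hC (g * g') x)
    have e2 : mean F (fun z => (ψ (x * g * y) - φb x - φb y)
          + (ψ (y⁻¹ * g' * z) - φb y⁻¹ - φb z))
        = (ψ (x * g * y) - φb x - φb y) + mean F (fun z => ψ (y⁻¹ * g' * z) - φb y⁻¹ - φb z) := by
      rw [mean_add (fun z : G => le_of_eq (rfl : |ψ (x * g * y) - φb x - φb y| = _))
        (P_bd' hD hC g' y⁻¹), mean_const hF]
    rw [e1, e2]
    rfl
  have step_y : ∀ x : G, mean F (fun y => mean F (T x y))
      = Qf F φ ψ g x + mean F (fun y => Qf F φ ψ g' y⁻¹) - Qf F φ ψ (g * g') x := by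
    intro x
    have e0 : (fun y => mean F (T x y)) = fun y => ((ψ (x * g * y) - φb x - φb y)
        + Qf F φ ψ g' y⁻¹) - Qf F φ ψ (g * g') x := by
      funext y; rw [step_z x y]
    have b1 : ∀ y : G, |(ψ (x * g * y) - φb x - φb y) + Qf F φ ψ g' y⁻¹|
        ≤ (C + 8 * D + |φb g|) + (C + 8 * D + |φb g'|) :=
      fun y => le_trans (abs_add_le _ _)
        (add_le_add (P_bd' hD hC g x y) (Q_bd' hD hC hF g' y⁻¹))
    have e1 : mean F (fun y => mean F (T x y))
        = mean F (fun y => (ψ (x * g * y) - φb x - φb y) + Qf F φ ψ g' y⁻¹)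
          - Qf F φ ψ (g * g') x := by
      rw [e0, mean_sub b1 (fun y : G => le_of_eq (rfl : |Qf F φ ψ (g * g') x| = _)),
        mean_const hF]
    have e2 : mean F (fun y => (ψ (x * g * y) - φb x - φb y) + Qf F φ ψ g' y⁻¹)
        = Qf F φ ψ g x + mean F (fun y => Qf F φ ψ g' y⁻¹) := by
      rw [mean_add (P_bd' hD hC g x) (fun y => Q_bd' hD hC hF g' y⁻¹)]
      rfl
    rw [e1, e2]
  have hQinv : mean F (fun y => Qf F φ ψ g' y⁻¹) = mean F (fun y => Qf F φ ψ g' y) :=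
    mean_inv hF (fun y => Qf F φ ψ g' y)
  have final : mean F (fun x => mean F (fun y => mean F (T x y)))
      = Jop F φ ψ g + Jop F φ ψ g' - Jop F φ ψ (g * g') := by
    have e0 : (fun x => mean F (fun y => mean F (T x y)))
        = fun x => (Qf F φ ψ g x + Jop F φ ψ g') - Qf F φ ψ (g * g') x := by
      funext x
      rw [step_y x, hQinv]
      rfl
    have b1 : ∀ x : G, |Qf F φ ψ g x + Jop F φ ψ g'|
        ≤ (C + 8 * D + |φb g|) + |Jop F φ ψ g'| :=
      fun x => le_trans (abs_add_le _ _) (add_le_add (Q_bd' hD hC hF g x) le_rfl)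
    rw [e0, mean_sub b1 (Q_bd' hD hC hF (g * g')),
      mean_add (Q_bd' hD hC hF g) (fun x : G => le_of_eq (rfl : |Jop F φ ψ g'| = _)),
      mean_const hF]
    rfl
  have bnd : |mean F (fun x => mean F (fun y => mean F (T x y)))| ≤ Dψ := by
    apply mean_bound
    intro x
    apply mean_bound
    intro y
    apply mean_bound
    intro z
    exact Tbd x y z
  rw [← final]
  exact bnd
end Main

lemma half_diff_le {A B M : ℝ} (hA : |A| ≤ M) (hB : |B| ≤ M) : |(A - B) / 2| ≤ M := by
  rw [abs_div, abs_two, div_le_iff₀ (by norm_num : (0:ℝ) < 2)]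
  calc |A - B| ≤ |A| + |B| := abs_sub A B
    _ ≤ M + M := add_le_add hA hB
    _ = M * 2 := by ring


end Aux

/-- **Quasimorphisms and amenable subgroups** (Theorem `quasimorphisms and amenable
subgroups`).  Let `G` be a finitely generated group, `H ≤ G` a subgroup admitting a
symmetric Følner sequence, and `φ : G → ℝ` a quasimorphism.  Then there is a symmetric
quasimorphism `φ_H`, equivalent to `φ` with `‖φ_H - φ‖ ≤ 3 D(φ)`, which is defect
minimizing among all quasimorphisms equivalent to it, satisfies
`φ_H (g h) = φ_H g + φ_H h = φ_H (h g)` for all `g ∈ G`, `h ∈ H`; in particular `φ_H`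
restricts on `H` to a homomorphism equal to the homogenization `h ↦ lim φ(hⁿ)/n`. -/
theorem exists_quasimorphism_adapted_to_amenable_subgroup
    {G : Type*} [Group G] [DecidableEq G] [Group.FG G]
    (H : Subgroup G) (F : ℕ → Finset G) (hF : IsSymmetricFolnerSeq H F)
    (φ : G → ℝ) (hφ : IsQuasimorphism φ) :
    ∃ φH : G → ℝ, IsQuasimorphism φH ∧
      (∀ g : G, φH g⁻¹ = -φH g) ∧
      (∀ g : G, |φH g - φ g| ≤ 3 * defect φ) ∧
      (∀ ψ : G → ℝ, IsQuasimorphism ψ → (∃ C : ℝ, ∀ g : G, |ψ g - φ g| ≤ C) →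
        defect φH ≤ defect ψ) ∧
      (∀ (g : G), ∀ h ∈ H, φH (g * h) = φH g + φH h ∧ φH (h * g) = φH g + φH h) ∧
      (∀ h ∈ H, Tendsto (fun n : ℕ => φ (h ^ n) / (n : ℝ)) atTop (𝓝 (φH h))) := by
  classical
  have hD : ∀ g h : G, |φ g + φ h - φ (g * h)| ≤ defect φ := defect_mem hφ
  have hD0 : 0 ≤ defect φ := defect_nonneg hφ
  -- the set of defects of equivalent quasimorphisms
  set S : Set ℝ := {d | ∃ ρ : G → ℝ, IsQuasimorphism ρ ∧
    (∃ C : ℝ, ∀ g : G, |ρ g - φ g| ≤ C) ∧ defect ρ = d} with hSdef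
  have hφS : defect φ ∈ S := ⟨φ, hφ, ⟨0, fun g => by simp⟩, rfl⟩
  have hSne : S.Nonempty := ⟨defect φ, hφS⟩
  have hSlb : ∀ d ∈ S, 0 ≤ d := by
    rintro d ⟨ρ, hρ, -, rfl⟩
    exact defect_nonneg hρ
  have hSbdd : BddBelow S := ⟨0, hSlb⟩
  set Dmin : ℝ := sInf S with hDmindef
  have hDmin0 : 0 ≤ Dmin := le_csInf hSne hSlb
  have hDminφ : Dmin ≤ defect φ := csInf_le hSbdd hφS
  -- minimizing sequence
  have hseq : ∀ n : ℕ, ∃ ρ : G → ℝ, IsQuasimorphism ρ ∧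
      (∃ C : ℝ, ∀ g : G, |ρ g - φ g| ≤ C) ∧ defect ρ < Dmin + 1 / ((n : ℝ) + 1) := by
    intro n
    have hpos : (0:ℝ) < 1 / ((n : ℝ) + 1) := by positivity
    obtain ⟨d, hdS, hdlt⟩ := exists_lt_of_csInf_lt hSne (lt_add_of_pos_right Dmin hpos)
    obtain ⟨ρ, h1, h2, h3⟩ := hdS
    exact ⟨ρ, h1, h2, by rw [h3]; exact hdlt⟩
  choose ρ hρq hρC hρd using hseq
  -- antisymmetrizations
  set ψs : ℕ → G → ℝ := fun n g => (ρ n g - ρ n g⁻¹) / 2 with hψsdef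
  have hψanti : ∀ n (g : G), ψs n g⁻¹ = -ψs n g := by
    intro n g
    show (ρ n g⁻¹ - ρ n g⁻¹⁻¹) / 2 = -((ρ n g - ρ n g⁻¹) / 2)
    rw [inv_inv]; ring
  have hψD : ∀ n, ∀ g h : G, |ψs n g + ψs n h - ψs n (g * h)| ≤ Dmin + 1 / ((n : ℝ) + 1) := by
    intro n g h
    have h1 := defect_mem (hρq n) g h
    have h2 := defect_mem (hρq n) h⁻¹ g⁻¹
    have hlt := le_of_lt (hρd n)
    have key : ψs n g + ψs n h - ψs n (g * h)
        = ((ρ n g + ρ n h - ρ n (g * h)) - (ρ n h⁻¹ + ρ n g⁻¹ - ρ n (h⁻¹ * g⁻¹))) / 2 := by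
      show (ρ n g - ρ n g⁻¹) / 2 + (ρ n h - ρ n h⁻¹) / 2 - (ρ n (g * h) - ρ n (g * h)⁻¹) / 2 = _
      rw [mul_inv_rev]; ring
    rw [key]
    exact le_trans (half_diff_le h1 h2) hlt
  -- bounded distance from homog φ
  have hψCb : ∀ n, ∃ Cn : ℝ, ∀ g : G, |ψs n g - homog φ g| ≤ Cn := by
    intro n
    obtain ⟨C0, hC0⟩ := hρC n
    refine ⟨C0 + defect φ + (defect (ρ n) + |ρ n 1|) / 2, fun g => ?_⟩
    have h1 : |ρ n g + ρ n g⁻¹ - ρ n 1| ≤ defect (ρ n) := by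
      have := defect_mem (hρq n) g g⁻¹
      rwa [mul_inv_cancel] at this
    have h2 : |φ g - homog φ g| ≤ defect φ := homog_sub_le hD g
    have h3 : ψs n g - homog φ g
        = (ρ n g - φ g) + (φ g - homog φ g) - ((ρ n g + ρ n g⁻¹ - ρ n 1) + ρ n 1) / 2 := by
      show (ρ n g - ρ n g⁻¹) / 2 - homog φ g = _
      ring
    rw [h3]
    obtain ⟨a1, a2⟩ := abs_le.1 (hC0 g)
    obtain ⟨b1, b2⟩ := abs_le.1 h2
    obtain ⟨c1, c2⟩ := abs_le.1 h1
    obtain ⟨d1, d2⟩ := abs_le.1 (le_refl |ρ n 1|)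
    rw [abs_le]
    constructor <;> [nlinarith [abs_nonneg (ρ n 1)]; nlinarith [abs_nonneg (ρ n 1)]]
  choose Cb hCb using hψCb
  -- the averaged sequence
  set χ : ℕ → G → ℝ := fun n => Jop F φ (ψs n) with hχdef
  have hχD : ∀ n, ∀ g g' : G, |χ n g + χ n g' - χ n (g * g')| ≤ Dmin + 1 / ((n : ℝ) + 1) :=
    fun n => J_defect hF hD (hCb n) (hψD n)
  have hχright : ∀ n (g : G), ∀ h ∈ H, χ n (g * h) = χ n g + homog φ h :=
    fun n g h hh => J_right hF hD (hCb n) hh g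
  have hχleft : ∀ n (g : G), ∀ h ∈ H, χ n (h * g) = χ n g + homog φ h :=
    fun n g h hh => J_left hF hD (hCb n) hh g
  have hχ1 : ∀ n, χ n 1 = 0 := fun n => J_one hF hD (hCb n) (hψanti n)
  have hχh : ∀ n, ∀ h ∈ H, χ n h = homog φ h := by
    intro n h hh
    have := hχright n 1 h hh
    rwa [one_mul, hχ1 n, zero_add] at this
  -- χ n is uniformly close to homog φ
  have hχφ : ∀ n (g : G), |χ n g - φ g| ≤ Cb n + 8 * defect φ + defect φ := by
    intro n g
    have h1 := J_dist hD (hCb n) hF g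
    have h2 := homog_sub_le hD g
    obtain ⟨a1, a2⟩ := abs_le.1 h1
    obtain ⟨b1, b2⟩ := abs_le.1 h2
    rw [abs_le]
    constructor <;> linarith
  have hχclose : ∀ n (g : G), |χ n g - homog φ g| ≤ Dmin + 1 / ((n : ℝ) + 1) := by
    intro n g
    have hhom : homog (χ n) g = homog φ g :=
      homog_eq_of_bdd (hχD n) hD (hχφ n) g
    have := homog_sub_le (hχD n) g
    rwa [hhom] at this
  -- the ultralimit
  have hbound : ∀ g : G, ∀ n : ℕ, |χ n g| ≤ |homog φ g| + (Dmin + 1) := by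
    intro g n
    have h1 := hχclose n g
    have h2 : 1 / ((n : ℝ) + 1) ≤ 1 := by
      rw [div_le_one (by positivity)]
      linarith [Nat.cast_nonneg (α := ℝ) n]
    obtain ⟨a1, a2⟩ := abs_le.1 h1
    rw [abs_le]
    constructor <;> [nlinarith [neg_abs_le (homog φ g), le_abs_self (homog φ g)];
      nlinarith [neg_abs_le (homog φ g), le_abs_self (homog φ g)]]
  set L : G → ℝ := fun g => ulim (fun n => χ n g) with hLdef
  have hLt : ∀ g : G, Tendsto (fun n => χ n g) (U : Filter ℕ) (𝓝 (L g)) :=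
    fun g => tendsto_ulim (exists_lim_of_bdd (fun n => hbound g n))
  have hDnt : Tendsto (fun n : ℕ => Dmin + 1 / ((n : ℝ) + 1)) (U : Filter ℕ) (𝓝 Dmin) := by
    have h0 : Tendsto (fun n : ℕ => 1 / ((n : ℝ) + 1)) atTop (𝓝 0) :=
      tendsto_one_div_add_atTop_nhds_zero_nat
    have h1 : Tendsto (fun n : ℕ => Dmin + 1 / ((n : ℝ) + 1)) atTop (𝓝 (Dmin + 0)) :=
      tendsto_const_nhds.add h0
    rw [add_zero] at h1
    exact h1.mono_left U_le_atTop
  have hLclose : ∀ g : G, |L g - homog φ g| ≤ Dmin := by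
    intro g
    have h1 : Tendsto (fun n => |χ n g - homog φ g|) (U : Filter ℕ) (𝓝 (|L g - homog φ g|)) :=
      ((hLt g).sub tendsto_const_nhds).abs
    exact le_of_tendsto_of_tendsto' h1 hDnt (fun n => hχclose n g)
  have hLright : ∀ (g : G), ∀ h ∈ H, L (g * h) = L g + homog φ h := by
    intro g h hh
    apply ulim_eq
    have e : (fun n => χ n (g * h)) = fun n => χ n g + homog φ h :=
      funext (fun n => hχright n g h hh)
    rw [e]
    exact (hLt g).add tendsto_const_nhds
  have hLleft : ∀ (g : G), ∀ h ∈ H, L (h * g) = L g + homog φ h := by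
    intro g h hh
    apply ulim_eq
    have e : (fun n => χ n (h * g)) = fun n => χ n g + homog φ h :=
      funext (fun n => hχleft n g h hh)
    rw [e]
    exact (hLt g).add tendsto_const_nhds
  have hLh : ∀ h ∈ H, L h = homog φ h := by
    intro h hh
    apply ulim_eq
    have e : (fun n => χ n h) = fun _ => homog φ h := funext (fun n => hχh n h hh)
    rw [e]
    exact tendsto_const_nhds
  have hLdefect : ∀ g g' : G, |L g + L g' - L (g * g')| ≤ Dmin := by
    intro g g'
    have ht : Tendsto (fun n => χ n g + χ n g' - χ n (g * g')) (U : Filter ℕ)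
        (𝓝 (L g + L g' - L (g * g'))) := ((hLt g).add (hLt g')).sub (hLt (g * g'))
    exact le_of_tendsto_of_tendsto' ht.abs hDnt (fun n => hχD n g g')
  -- the final quasimorphism
  set φH : G → ℝ := fun g => (L g - L g⁻¹) / 2 with hφHdef
  have hbnd : ∀ g h : G, |φH g + φH h - φH (g * h)| ≤ Dmin := by
    intro g h
    have h1 := hLdefect g h
    have h2 := hLdefect h⁻¹ g⁻¹
    have key : φH g + φH h - φH (g * h)
        = ((L g + L h - L (g * h)) - (L h⁻¹ + L g⁻¹ - L (h⁻¹ * g⁻¹))) / 2 := by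
      show (L g - L g⁻¹) / 2 + (L h - L h⁻¹) / 2 - (L (g * h) - L ((g * h))⁻¹) / 2 = _
      rw [mul_inv_rev]; ring
    rw [key]
    exact half_diff_le h1 h2
  have hφHanti : ∀ g : G, φH g⁻¹ = -φH g := by
    intro g
    show (L g⁻¹ - L g⁻¹⁻¹) / 2 = -((L g - L g⁻¹) / 2)
    rw [inv_inv]; ring
  have hφHclose : ∀ g : G, |φH g - homog φ g| ≤ Dmin := by
    intro g
    have h1 := hLclose g
    have h2 := hLclose g⁻¹
    have key : φH g - homog φ g = ((L g - homog φ g) - (L g⁻¹ - homog φ g⁻¹)) / 2 := by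
      show (L g - L g⁻¹) / 2 - homog φ g = _
      rw [homog_inv hD g]
      ring
    rw [key]
    exact half_diff_le h1 h2
  have hφHh : ∀ h ∈ H, φH h = homog φ h := by
    intro h hh
    show (L h - L h⁻¹) / 2 = homog φ h
    rw [hLh h hh, hLh h⁻¹ (inv_mem hh), homog_inv hD h]
    ring
  refine ⟨φH, ⟨Dmin, hbnd⟩, hφHanti, ?_, ?_, ?_, ?_⟩
  · -- distance at most 3 D(φ)
    intro g
    have h4 := hφHclose g
    have h5 := homog_sub_le hD g
    obtain ⟨a1, a2⟩ := abs_le.1 h4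
    obtain ⟨b1, b2⟩ := abs_le.1 h5
    rw [abs_le]
    constructor <;> linarith
  · -- defect minimality
    intro ψ hψq hψC
    have h1 : defect φH ≤ Dmin := defect_le hbnd
    have h2 : Dmin ≤ defect ψ := csInf_le hSbdd ⟨ψ, hψq, hψC, rfl⟩
    linarith
  · -- H-equivariance
    intro g h hh
    have e1 : L (g * h) = L g + homog φ h := hLright g h hh
    have e2 : L ((g * h)⁻¹) = L g⁻¹ - homog φ h := by
      rw [mul_inv_rev]
      have := hLleft g⁻¹ h⁻¹ (inv_mem hh)
      rw [homog_inv hD h] at this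
      linarith
    have e3 : L (h * g) = L g + homog φ h := hLleft g h hh
    have e4 : L ((h * g)⁻¹) = L g⁻¹ - homog φ h := by
      rw [mul_inv_rev]
      have := hLright g⁻¹ h⁻¹ (inv_mem hh)
      rw [homog_inv hD h] at this
      linarith
    constructor
    · have : φH (g * h) = φH g + homog φ h := by
        show (L (g * h) - L ((g * h))⁻¹) / 2 = (L g - L g⁻¹) / 2 + homog φ h
        rw [e1, e2]; ring
      rw [this, hφHh h hh]
    · have : φH (h * g) = φH g + homog φ h := by
        show (L (h * g) - L ((h * g))⁻¹) / 2 = (L g - L g⁻¹) / 2 + homog φ h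
        rw [e3, e4]; ring
      rw [this, hφHh h hh]
  · -- homogenization limit
    intro h hh
    have := tendsto_homog hD h
    rwa [← hφHh h hh] at this
end

section
/- Let b be an alternating word of even length M ≥ 2 in the free group F(a,b). Then for every w ∈ F(a,b) the limit rot̄_b(w) = lim_{n→∞} ρ̄_b(wⁿ)(0)/n exists, and rot̄_b : F(a,b) → ℝ is a homogeneous quasimorphism of defect at most M. Moreover, there is a homomorphism ρ_b from F(a,b) to the group Homeo⁺_{Mℤ}(ℝ) of orientation-preserving homeomorphisms of ℝ commuting with translation by M, such that rot̄_b(w) = rot(ρ_b(w)) for every w ∈ F(a,b). -/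
open Filter Topology

/-- A (reduced) word in the free group `F(a,b)`, given as a list of letters
`(generator, sign)`, is *alternating* if its letters alternate between the two
generators. -/
def AlternatingWord (L : List (Bool × Bool)) : Prop :=
  L.Chain' fun p q => p.1 ≠ q.1

/-- The formal inverse of a letter. -/
def invLetter (p : Bool × Bool) : Bool × Bool := (p.1, !p.2)

/-- Given the list `L = [x₀, …, x_{M-1}]` of letters of the base word `b`, the map
`ρ̄_b(y) : ℤ → ℤ` associated to a letter `y`:
`i ↦ i + 1` if `y = x_{i mod M}`, `i ↦ i - 1` if `y = x_{(i-1) mod M}⁻¹`, and `i ↦ i`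
otherwise. -/
def rhoStep (L : List (Bool × Bool)) (y : Bool × Bool) (i : ℤ) : ℤ :=
  if y = L.getD (i % (L.length : ℤ)).toNat default then i + 1
  else if y = invLetter (L.getD ((i - 1) % (L.length : ℤ)).toNat default) then i - 1
  else i

/-- The map `ρ̄_b(w) : ℤ → ℤ` for `w` in the free group on two generators, defined as the
composite `ρ̄_b(y₁) ∘ ⋯ ∘ ρ̄_b(y_m)` over the reduced word `y₁ ⋯ y_m` of `w`. -/
def rhoWord (L : List (Bool × Bool)) (w : FreeGroup Bool) : ℤ → ℤ :=
  (w.toWord.map (rhoStep L)).foldr (· ∘ ·) id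

/-- The group of orientation-preserving homeomorphisms of `ℝ` commuting with translation by
`M`, realized as the subgroup of `Equiv.Perm ℝ` consisting of strictly increasing bijections
`f` with `f (x + M) = f x + M`.  (A bijection of `ℝ` is an orientation-preserving
homeomorphism iff it is strictly increasing.) -/
def HomeoPlusMZ (M : ℕ) : Subgroup (Equiv.Perm ℝ) where
  carrier := {f | StrictMono f ∧ ∀ x : ℝ, f (x + M) = f x + M}
  one_mem' := ⟨fun _ _ h => h, fun _ => rfl⟩
  mul_mem' := by
    rintro f g ⟨hf1, hf2⟩ ⟨hg1, hg2⟩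
    refine ⟨fun a b hab => hf1 (hg1 hab), fun x => ?_⟩
    show f (g (x + M)) = f (g x) + M
    rw [hg2, hf2]
  inv_mem' := by
    rintro f ⟨hf1, hf2⟩
    refine ⟨fun a b hab => ?_, fun x => ?_⟩
    · have h : f (f⁻¹ a) < f (f⁻¹ b) := by
        rwa [Equiv.Perm.coe_inv, Equiv.apply_symm_apply, Equiv.apply_symm_apply]
      exact (hf1.lt_iff_lt).mp h
    · apply hf1.injective
      rw [Equiv.Perm.coe_inv, Equiv.apply_symm_apply, hf2, Equiv.apply_symm_apply]


open CircleDeg1Lift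

local notation "tnum" => CircleDeg1Lift.translationNumber




theorem commute_translate_int (c : ℤ) (f : CircleDeg1Lift) :
    Commute ((translate (Multiplicative.ofAdd (c : ℝ))) : CircleDeg1Lift) f := by
  apply CircleDeg1Lift.ext
  intro x
  show ((translate (Multiplicative.ofAdd (c : ℝ)) : CircleDeg1Lift) : ℝ → ℝ)
      (f x) = f (((translate (Multiplicative.ofAdd (c : ℝ)) : CircleDeg1Lift) : ℝ → ℝ) x)
  rw [CircleDeg1Lift.translate_apply, CircleDeg1Lift.translate_apply, CircleDeg1Lift.map_int_add]

theorem units_defect_le (u v : CircleDeg1Liftˣ) :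
    tnum ((u : CircleDeg1Lift) * (v : CircleDeg1Lift)) ≤ tnum ↑u + tnum ↑v + 1 := by
  set fg : CircleDeg1Lift := (u : CircleDeg1Lift) * (v : CircleDeg1Lift) with hfg
  set c : ℤ := ⌈tnum fg⌉ - 1 with hc
  have hcc : (c : ℝ) = (⌈tnum fg⌉ : ℝ) - 1 := by push_cast [hc]; ring
  have hlt : (c : ℝ) < tnum fg := by
    have := Int.ceil_lt_add_one (tnum fg)
    rw [hcc]; linarith
  have hpt : ∀ x : ℝ, x + (c : ℝ) < fg x :=
    fun x => fg.lt_map_of_int_lt_translationNumber hlt x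
  set K : CircleDeg1Lift :=
    (translate (Multiplicative.ofAdd (c : ℝ)) : CircleDeg1Lift) * (↑(v⁻¹) : CircleDeg1Lift)
    with hK
  have hKle : K ≤ (↑u : CircleDeg1Lift) := by
    intro y
    have h1 := hpt ((↑(v⁻¹) : CircleDeg1Lift) y)
    have h2 : fg ((↑(v⁻¹) : CircleDeg1Lift) y) = (↑u : CircleDeg1Lift) y := by
      rw [hfg, CircleDeg1Lift.mul_apply]
      congr 1
      exact units_apply_inv_apply v y
    have h3 : K y = (c : ℝ) + (↑(v⁻¹) : CircleDeg1Lift) y := by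
      rw [hK, CircleDeg1Lift.mul_apply, CircleDeg1Lift.translate_apply]
    rw [h3]
    rw [h2] at h1
    linarith
  have htnumK : tnum K = (c : ℝ) - tnum ↑v := by
    rw [hK, CircleDeg1Lift.translationNumber_mul_of_commute (commute_translate_int c _),
      CircleDeg1Lift.translationNumber_translate, CircleDeg1Lift.translationNumber_units_inv]
    simp [sub_eq_add_neg]
  have hmono := CircleDeg1Lift.translationNumber_mono hKle
  rw [htnumK] at hmono
  have hceil : tnum fg ≤ (c : ℝ) + 1 := by
    have := Int.le_ceil (tnum fg)
    rw [hcc]; linarith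
  linarith

theorem units_defect (u v : CircleDeg1Liftˣ) :
    |tnum ↑u + tnum ↑v - tnum ((u : CircleDeg1Lift) * (v : CircleDeg1Lift))| ≤ 1 := by
  have h1 := units_defect_le u v
  have h2 := units_defect_le (u * v) v⁻¹
  have e1 : ((u * v : CircleDeg1Liftˣ) : CircleDeg1Lift) * ((v⁻¹ : CircleDeg1Liftˣ) : CircleDeg1Lift)
      = (((u * v) * v⁻¹ : CircleDeg1Liftˣ) : CircleDeg1Lift) :=
    (Units.val_mul _ _).symm
  have e2 : (u * v) * v⁻¹ = u := by group
  rw [e1, e2, CircleDeg1Lift.translationNumber_units_inv] at h2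
  have e3 : ((u * v : CircleDeg1Liftˣ) : CircleDeg1Lift)
      = (u : CircleDeg1Lift) * (v : CircleDeg1Lift) := Units.val_mul u v
  rw [e3] at h2
  rw [abs_le]
  constructor <;> linarith

namespace CQM

variable {M : ℕ}

/-- The rescaled lift associated to an element of `HomeoPlusMZ M`. -/
noncomputable def toLift (hM : 0 < M) (F : HomeoPlusMZ M) : CircleDeg1Lift where
  toFun := fun x => ((F : Equiv.Perm ℝ) ((M : ℝ) * x)) / (M : ℝ)
  monotone' := by
    intro x y hxy
    have hMpos : (0:ℝ) < M := by exact_mod_cast hM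
    have h1 : (M : ℝ) * x ≤ (M : ℝ) * y := by nlinarith
    have h2 := (F.2.1.le_iff_le).mpr h1
    exact (div_le_div_iff_of_pos_right hMpos).mpr h2
  map_add_one' := by
    intro x
    have hMpos : (0:ℝ) < M := by exact_mod_cast hM
    have hMne : (M : ℝ) ≠ 0 := ne_of_gt hMpos
    show ((F : Equiv.Perm ℝ) ((M : ℝ) * (x + 1))) / (M : ℝ)
      = ((F : Equiv.Perm ℝ) ((M : ℝ) * x)) / (M : ℝ) + 1
    have e : (M : ℝ) * (x + 1) = (M : ℝ) * x + (M : ℝ) := by ring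
    rw [e, F.2.2]
    field_simp

theorem toLift_apply (hM : 0 < M) (F : HomeoPlusMZ M) (x : ℝ) :
    toLift hM F x = ((F : Equiv.Perm ℝ) ((M : ℝ) * x)) / (M : ℝ) := rfl

/-- `toLift` as a monoid hom. -/
noncomputable def toLiftHom (hM : 0 < M) : HomeoPlusMZ M →* CircleDeg1Lift where
  toFun := toLift hM
  map_one' := by
    apply CircleDeg1Lift.ext
    intro x
    have hMne : (M : ℝ) ≠ 0 := by positivity
    show ((1 : Equiv.Perm ℝ) ((M : ℝ) * x)) / (M : ℝ) = x
    simp only [Equiv.Perm.coe_one, id_eq]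
    field_simp
  map_mul' := by
    intro F G
    apply CircleDeg1Lift.ext
    intro x
    have hMne : (M : ℝ) ≠ 0 := by positivity
    show (((F * G : HomeoPlusMZ M) : Equiv.Perm ℝ) ((M:ℝ) * x)) / (M : ℝ)
      = (toLift hM F) ((toLift hM G) x)
    rw [toLift_apply, toLift_apply]
    rw [mul_div_cancel₀ _ hMne]
    rfl

/-- The unit version. -/
noncomputable def toLiftUnits (hM : 0 < M) : HomeoPlusMZ M →* CircleDeg1Liftˣ :=
  (toLiftHom hM).toHomUnits

theorem toLiftUnits_coe (hM : 0 < M) (F : HomeoPlusMZ M) :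
    ((toLiftUnits hM F : CircleDeg1Liftˣ) : CircleDeg1Lift) = toLift hM F := rfl

end CQM

namespace CQM

/-! ### The periodic letter sequence -/

/-- The `i`-th letter of the periodic extension of the base word. -/
def X (L : List (Bool × Bool)) (i : ℤ) : Bool × Bool :=
  L.getD (i % (L.length : ℤ)).toNat default

/-- Generator of the first letter. -/
def g0 (L : List (Bool × Bool)) : Bool := (L.getD 0 default).1

/-- Base parity of the blocks for generator `g`. -/
def pbase (L : List (Bool × Bool)) (g : Bool) : ℤ := if g0 L = g then 0 else 1

section Letters

variable {L : List (Bool × Bool)} {M : ℕ}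
variable (hlen : L.length = M) (halt : AlternatingWord L) (heven : Even M) (hM : 2 ≤ M)

include hM in
theorem Mpos : 0 < M := lt_of_lt_of_le two_pos hM

include hlen hM in
theorem X_periodic (i : ℤ) : X L (i + M) = X L i := by
  unfold X
  congr 1
  rw [hlen]
  have : (i + (M:ℤ)) % (M:ℤ) = i % (M:ℤ) := by
    simpa using Int.add_mul_emod_self_left (a := i) (b := (M:ℤ)) (c := 1)
  rw [this]

include hlen halt heven hM in
theorem X_gen (i : ℤ) : (X L i).1 = (if i % 2 = 0 then g0 L else !g0 L) := by
  have hMpos : 0 < M := Mpos (hM := hM)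
  have hlpos : 0 < L.length := by omega
  -- in-list parity statement
  have hadj : ∀ j : ℕ, (hj : j + 1 < L.length) →
      (L.get ⟨j+1, hj⟩).1 = !(L.get ⟨j, by omega⟩).1 := by
    intro j hj
    have := List.isChain_iff_getElem.mp halt j (by omega)
    rcases Bool.eq_false_or_eq_true (L.get ⟨j+1, hj⟩).1 with h | h <;>
      rcases Bool.eq_false_or_eq_true (L.get ⟨j, by omega⟩).1 with h' | h' <;>
      simp_all
  have hpar : ∀ j : ℕ, (hj : j < L.length) →
      (L.get ⟨j, hj⟩).1 = (if j % 2 = 0 then g0 L else !g0 L) := by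
    intro j
    induction j with
    | zero =>
      intro hj
      simp only [Nat.zero_mod, if_pos rfl]
      unfold g0
      rw [List.getD_eq_getElem L default hlpos]
      rfl
    | succ n ih =>
      intro hj
      have hn : n < L.length := by omega
      have := hadj n hj
      rw [this, ih hn]
      rcases Nat.even_or_odd n with he | ho
      · have h1 : n % 2 = 0 := Nat.even_iff.mp he
        have h2 : (n+1) % 2 = 1 := by omega
        simp [h1, h2]
      · have h1 : n % 2 = 1 := Nat.odd_iff.mp ho
        have h2 : (n+1) % 2 = 0 := by omega
        simp [h1, h2]
  -- now transfer to ℤ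
  have hnn : 0 ≤ i % (L.length : ℤ) := Int.emod_nonneg i (by exact_mod_cast by omega)
  have hlt : i % (L.length : ℤ) < (L.length : ℤ) := Int.emod_lt_of_pos i (by exact_mod_cast hlpos)
  set j : ℕ := (i % (L.length : ℤ)).toNat with hj
  have hjl : j < L.length := by omega
  have hXe : X L i = L.get ⟨j, hjl⟩ := by
    unfold X
    rw [List.getD_eq_getElem L default hjl]
    rfl
  rw [hXe, hpar j hjl]
  -- parity of j equals parity of i
  have hjz : (j : ℤ) = i % (L.length : ℤ) := by omega
  have h2M : (2:ℤ) ∣ (L.length : ℤ) := by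
    rw [hlen]
    rcases heven with ⟨m, hm⟩
    exact ⟨m, by push_cast; omega⟩
  have hpar2 : (j : ℤ) % 2 = i % 2 := by
    rw [hjz]
    exact Int.emod_emod_of_dvd i h2M
  by_cases hcase : i % 2 = 0
  · have : j % 2 = 0 := by omega
    simp [this, hcase]
  · have hi1 : i % 2 = 1 := by omega
    have : j % 2 = 1 := by omega
    simp [this, hi1]

include hlen halt heven hM in
theorem X_gen_iff (g : Bool) (i : ℤ) : (X L i).1 = g ↔ i % 2 = pbase L g := by
  rw [X_gen hlen halt heven hM]
  unfold pbase
  rcases (by omega : i % 2 = 0 ∨ i % 2 = 1) with h | h <;> rw [h] <;>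
    rcases Bool.eq_false_or_eq_true (g0 L) with h0 | h0 <;>
    rcases Bool.eq_false_or_eq_true g with hg | hg <;>
    simp [h0, hg]

include hlen halt heven hM in
theorem X_flip (i : ℤ) : (X L (i + 1)).1 = !(X L i).1 := by
  rw [X_gen hlen halt heven hM, X_gen hlen halt heven hM]
  have h01 : i % 2 = 0 ∨ i % 2 = 1 := by omega
  rcases h01 with h | h
  · have : (i+1) % 2 = 1 := by omega
    simp [h, this]
  · have : (i+1) % 2 = 0 := by omega
    simp [h, this]

end Letters

end CQM
namespace CQM

/-! ### The basic piecewise-linear bijections -/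

noncomputable def phiT (u : ℝ) : ℝ := if u ≤ 0 then 3*u + 1 else u/3 + 1

noncomputable def phiF (u : ℝ) : ℝ := if u ≤ 1 then (u-1)/3 else 3*u - 3

theorem phiF_phiT (u : ℝ) : phiF (phiT u) = u := by
  unfold phiT phiF
  by_cases h : u ≤ 0
  · rw [if_pos h, if_pos (by linarith)]
    ring
  · rw [if_neg h, if_neg (by push_neg at h; linarith)]
    ring

theorem phiT_phiF (u : ℝ) : phiT (phiF u) = u := by
  unfold phiT phiF
  by_cases h : u ≤ 1
  · rw [if_pos h, if_pos (by linarith)]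
    ring
  · rw [if_neg h, if_neg (by push_neg at h; linarith)]
    ring

theorem phiT_mono : StrictMono phiT := by
  intro u v huv
  unfold phiT
  by_cases hu : u ≤ 0 <;> by_cases hv : v ≤ 0 <;>
    simp only [if_pos, if_neg, hu, hv, ite_true, ite_false] <;>
    (try push_neg at *) <;> first
      | linarith
      | (rw [if_pos hu, if_pos hv]; linarith)

theorem phiF_mono : StrictMono phiF := by
  intro u v huv
  unfold phiF
  by_cases hu : u ≤ 1 <;> by_cases hv : v ≤ 1 <;>
    [skip; skip; skip; skip] <;>
    first
      | (rw [if_pos hu, if_pos hv]; linarith)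
      | (rw [if_pos hu, if_neg hv]; push_neg at hv; linarith)
      | (rw [if_neg hu, if_pos hv]; push_neg at hu; linarith)
      | (rw [if_neg hu, if_neg hv]; push_neg at hu hv; linarith)

theorem phiT_mem {u : ℝ} (h1 : -(1/2) ≤ u) (h2 : u < 3/2) :
    -(1/2) ≤ phiT u ∧ phiT u < 3/2 := by
  unfold phiT
  by_cases h : u ≤ 0
  · rw [if_pos h]; constructor <;> linarith
  · rw [if_neg h]; push_neg at h; constructor <;> linarith

theorem phiF_mem {u : ℝ} (h1 : -(1/2) ≤ u) (h2 : u < 3/2) :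
    -(1/2) ≤ phiF u ∧ phiF u < 3/2 := by
  unfold phiF
  by_cases h : u ≤ 1
  · rw [if_pos h]; constructor <;> linarith
  · rw [if_neg h]; push_neg at h; constructor <;> linarith

/-! ### Blocks -/

/-- The index of the block (for generator `g`) containing `x`. -/
noncomputable def blockIdx (L : List (Bool × Bool)) (g : Bool) (x : ℝ) : ℤ :=
  pbase L g + 2 * ⌊(x + 1/2 - pbase L g)/2⌋

section Blocks

variable {L : List (Bool × Bool)} {M : ℕ}
variable (hlen : L.length = M) (halt : AlternatingWord L) (heven : Even M) (hM : 2 ≤ M)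

theorem bI_mem (g : Bool) (x : ℝ) :
    (blockIdx L g x : ℝ) - 1/2 ≤ x ∧ x < (blockIdx L g x : ℝ) + 3/2 := by
  unfold blockIdx
  have h1 := Int.floor_le ((x + 1/2 - pbase L g)/2)
  have h2 := Int.lt_floor_add_one ((x + 1/2 - pbase L g)/2)
  constructor <;> push_cast <;> linarith

include hlen halt heven hM in
theorem bI_gen (g : Bool) (x : ℝ) : (X L (blockIdx L g x)).1 = g := by
  rw [X_gen_iff hlen halt heven hM]
  unfold blockIdx
  have : pbase L g = 0 ∨ pbase L g = 1 := by unfold pbase; split <;> simp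
  omega

include hlen halt heven hM in
theorem bI_eq (g : Bool) (i : ℤ) (x : ℝ) (hgen : (X L i).1 = g)
    (h1 : (i:ℝ) - 1/2 ≤ x) (h2 : x < (i:ℝ) + 3/2) : blockIdx L g x = i := by
  rw [X_gen_iff hlen halt heven hM] at hgen
  unfold blockIdx
  have hpb : pbase L g = 0 ∨ pbase L g = 1 := by unfold pbase; split <;> simp
  set p := pbase L g with hp
  have hk : 2 ∣ (i - p) := by omega
  obtain ⟨k, hk⟩ := hk
  have hfl : ⌊(x + 1/2 - p)/2⌋ = k := by
    rw [Int.floor_eq_iff]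
    constructor
    · push_cast
      have : ((i:ℝ) - p) = 2 * k := by exact_mod_cast congrArg Int.cast hk
      linarith
    · push_cast
      have : ((i:ℝ) - p) = 2 * k := by exact_mod_cast congrArg Int.cast hk
      linarith
  rw [hfl]
  omega

include hlen hM heven in
theorem bI_add_M (g : Bool) (x : ℝ) : blockIdx L g (x + M) = blockIdx L g x + M := by
  unfold blockIdx
  obtain ⟨m, hm⟩ := heven
  have hMm : (M:ℝ) = 2 * m := by rw [hm]; push_cast; ring
  have : (x + M + 1/2 - pbase L g)/2 = (x + 1/2 - pbase L g)/2 + (m:ℝ) := by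
    rw [hMm]; ring
  rw [this, Int.floor_add_natCast]
  push_cast
  omega

end Blocks

end CQM
namespace CQM

/-- The homeomorphism of `ℝ` associated to a letter. -/
noncomputable def realStep (L : List (Bool × Bool)) (y : Bool × Bool) (x : ℝ) : ℝ :=
  (blockIdx L y.1 x : ℝ) +
    (if (X L (blockIdx L y.1 x)).2 = y.2 then phiT (x - blockIdx L y.1 x)
     else phiF (x - blockIdx L y.1 x))

section RealStep

variable {L : List (Bool × Bool)} {M : ℕ}
variable (hlen : L.length = M) (halt : AlternatingWord L) (heven : Even M) (hM : 2 ≤ M)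

include hlen halt heven hM

theorem rs_eval (y : Bool × Bool) (i : ℤ) (x : ℝ) (hgen : (X L i).1 = y.1)
    (h1 : (i:ℝ) - 1/2 ≤ x) (h2 : x < (i:ℝ) + 3/2) :
    realStep L y x = (i:ℝ) +
      (if (X L i).2 = y.2 then phiT (x - i) else phiF (x - i)) := by
  unfold realStep
  rw [bI_eq hlen halt heven hM y.1 i x hgen h1 h2]

theorem rs_mem (y : Bool × Bool) (i : ℤ) (x : ℝ) (hgen : (X L i).1 = y.1)
    (h1 : (i:ℝ) - 1/2 ≤ x) (h2 : x < (i:ℝ) + 3/2) :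
    (i:ℝ) - 1/2 ≤ realStep L y x ∧ realStep L y x < (i:ℝ) + 3/2 := by
  rw [rs_eval hlen halt heven hM y i x hgen h1 h2]
  have hu1 : -(1/2) ≤ x - i := by linarith
  have hu2 : x - i < 3/2 := by linarith
  by_cases hc : (X L i).2 = y.2
  · rw [if_pos hc]
    have := phiT_mem hu1 hu2
    constructor <;> linarith [this.1, this.2]
  · rw [if_neg hc]
    have := phiF_mem hu1 hu2
    constructor <;> linarith [this.1, this.2]

theorem rs_mem' (y : Bool × Bool) (x : ℝ) :
    (blockIdx L y.1 x : ℝ) - 1/2 ≤ realStep L y x ∧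
      realStep L y x < (blockIdx L y.1 x : ℝ) + 3/2 :=
  rs_mem hlen halt heven hM y _ x (bI_gen hlen halt heven hM y.1 x)
    (bI_mem y.1 x).1 (bI_mem y.1 x).2

theorem rs_inv (y : Bool × Bool) (x : ℝ) :
    realStep L (invLetter y) (realStep L y x) = x := by
  set i := blockIdx L y.1 x with hi
  have hgen : (X L i).1 = y.1 := bI_gen hlen halt heven hM y.1 x
  have hmem := bI_mem (L := L) y.1 x
  have hmem2 := rs_mem' hlen halt heven hM y x
  have hgen' : (X L i).1 = (invLetter y).1 := hgen
  have heval2 := rs_eval hlen halt heven hM (invLetter y) i (realStep L y x) hgen'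
    (by exact_mod_cast hmem2.1) (by exact_mod_cast hmem2.2)
  rw [heval2]
  have heval1 := rs_eval hlen halt heven hM y i x hgen
    (by exact_mod_cast hmem.1) (by exact_mod_cast hmem.2)
  rw [heval1]
  by_cases hc : (X L i).2 = y.2
  · rw [if_pos hc]
    have hc' : ¬((X L i).2 = (invLetter y).2) := by
      unfold invLetter
      rw [hc]
      cases y.2 <;> simp
    rw [if_neg hc']
    have : (i:ℝ) + phiT (x - i) - i = phiT (x - i) := by ring
    rw [this, phiF_phiT]
    ring
  · rw [if_neg hc]
    have hc' : (X L i).2 = (invLetter y).2 := by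
      unfold invLetter
      cases hy : y.2 <;> cases hXi : (X L i).2 <;> simp_all
    rw [if_pos hc']
    have : (i:ℝ) + phiF (x - i) - i = phiF (x - i) := by ring
    rw [this, phiT_phiF]
    ring

theorem rs_mono (y : Bool × Bool) : StrictMono (realStep L y) := by
  intro x x' hxx
  set i := blockIdx L y.1 x with hi
  set i' := blockIdx L y.1 x' with hi'
  have hii : i ≤ i' := by
    rw [hi, hi']
    unfold blockIdx
    have h : ⌊(x + 1/2 - (pbase L y.1 : ℝ))/2⌋ ≤ ⌊(x' + 1/2 - (pbase L y.1 : ℝ))/2⌋ := by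
      apply Int.floor_le_floor
      linarith
    omega
  have hm := rs_mem' hlen halt heven hM y x
  have hm' := rs_mem' hlen halt heven hM y x'
  rcases eq_or_lt_of_le hii with heq | hlt
  · -- same block
    have hgen : (X L i).1 = y.1 := bI_gen hlen halt heven hM y.1 x
    have hbm := bI_mem (L := L) y.1 x
    have hbm' := bI_mem (L := L) y.1 x'
    rw [rs_eval hlen halt heven hM y i x hgen hbm.1 hbm.2]
    rw [show realStep L y x' = _ from
      rs_eval hlen halt heven hM y i x' (by rw [heq]; exact bI_gen hlen halt heven hM y.1 x')
        (by rw [heq]; exact_mod_cast hbm'.1) (by rw [heq]; exact_mod_cast hbm'.2)]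
    by_cases hc : (X L i).2 = y.2
    · rw [if_pos hc, if_pos hc]
      have := phiT_mono (show x - i < x' - i by linarith)
      linarith
    · rw [if_neg hc, if_neg hc]
      have := phiF_mono (show x - i < x' - i by linarith)
      linarith
  · -- different blocks: i + 2 ≤ i'
    have hpar : i % 2 = i' % 2 := by
      have h1 : (X L i).1 = y.1 := bI_gen hlen halt heven hM y.1 x
      have h2 : (X L i').1 = y.1 := bI_gen hlen halt heven hM y.1 x'
      rw [X_gen_iff hlen halt heven hM] at h1 h2
      omega
    have hii2 : i + 2 ≤ i' := by omega
    have : realStep L y x < (i:ℝ) + 3/2 := hm.2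
    have h2 : (i':ℝ) - 1/2 ≤ realStep L y x' := hm'.1
    have : ((i:ℝ) + 2) ≤ (i':ℝ) := by exact_mod_cast hii2
    linarith

include heven in
theorem rs_add_M (y : Bool × Bool) (x : ℝ) :
    realStep L y (x + M) = realStep L y x + M := by
  unfold realStep
  rw [bI_add_M hlen heven hM y.1 x]
  rw [X_periodic hlen hM]
  have harg : x + (M:ℝ) - ((blockIdx L y.1 x : ℤ) + (M:ℤ) : ℤ) = x - blockIdx L y.1 x := by
    push_cast
    ring
  rw [harg]
  push_cast
  ring

end RealStep

end CQM
namespace CQM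

section Perms

variable {L : List (Bool × Bool)} {M : ℕ}
variable (hlen : L.length = M) (halt : AlternatingWord L) (heven : Even M) (hM : 2 ≤ M)

/-- The permutation of `ℝ` associated to a generator. -/
noncomputable def stepPerm (hlen : L.length = M) (halt : AlternatingWord L)
    (heven : Even M) (hM : 2 ≤ M) (g : Bool) : Equiv.Perm ℝ where
  toFun := realStep L (g, true)
  invFun := realStep L (g, false)
  left_inv := fun x => by
    have := rs_inv hlen halt heven hM (g, true) x
    simpa [invLetter] using this
  right_inv := fun x => by
    have := rs_inv hlen halt heven hM (g, false) x
    simpa [invLetter] using this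

/-- The generator as an element of `HomeoPlusMZ M`. -/
noncomputable def Fgen (hlen : L.length = M) (halt : AlternatingWord L)
    (heven : Even M) (hM : 2 ≤ M) (g : Bool) : HomeoPlusMZ M :=
  ⟨stepPerm hlen halt heven hM g,
    rs_mono hlen halt heven hM (g, true),
    fun x => rs_add_M hlen halt heven hM (g, true) x⟩

theorem Fgen_apply (g : Bool) (x : ℝ) :
    ((Fgen hlen halt heven hM g : HomeoPlusMZ M) : Equiv.Perm ℝ) x
      = realStep L (g, true) x := rfl

theorem Fgen_inv_apply (g : Bool) (x : ℝ) :
    (((Fgen hlen halt heven hM g)⁻¹ : HomeoPlusMZ M) : Equiv.Perm ℝ) x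
      = realStep L (g, false) x := rfl

/-- The homomorphism `F(a,b) → Homeo⁺_{Mℤ}(ℝ)`. -/
noncomputable def rhoHom (hlen : L.length = M) (halt : AlternatingWord L)
    (heven : Even M) (hM : 2 ≤ M) : FreeGroup Bool →* HomeoPlusMZ M :=
  FreeGroup.lift (Fgen hlen halt heven hM)

/-- Real-word evaluation: composite of `realStep` over a list of letters. -/
noncomputable def realList (L : List (Bool × Bool)) (W : List (Bool × Bool)) : ℝ → ℝ :=
  (W.map (realStep L)).foldr (· ∘ ·) id

theorem realList_nil (x : ℝ) : realList L [] x = x := rfl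

theorem realList_cons (y : Bool × Bool) (W : List (Bool × Bool)) (x : ℝ) :
    realList L (y :: W) x = realStep L y (realList L W x) := rfl

theorem prod_eval : ∀ (W : List (Bool × Bool)) (x : ℝ),
    (((W.map fun z => cond z.2 (Fgen hlen halt heven hM z.1)
        (Fgen hlen halt heven hM z.1)⁻¹).prod : HomeoPlusMZ M) : Equiv.Perm ℝ) x
      = realList L W x := by
  intro W
  induction W with
  | nil => intro x; rfl
  | cons z W ih =>
    intro x
    rw [List.map_cons, List.prod_cons, realList_cons]
    have hmul : ∀ (A B : HomeoPlusMZ M) (x : ℝ),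
        ((A * B : HomeoPlusMZ M) : Equiv.Perm ℝ) x
          = ((A : Equiv.Perm ℝ)) (((B : HomeoPlusMZ M) : Equiv.Perm ℝ) x) := by
      intro A B x; rfl
    rw [hmul, ih]
    obtain ⟨g, s⟩ := z
    cases s
    · rw [show (cond false (Fgen hlen halt heven hM g) (Fgen hlen halt heven hM g)⁻¹)
        = (Fgen hlen halt heven hM g)⁻¹ from rfl]
      exact Fgen_inv_apply hlen halt heven hM g _
    · rw [show (cond true (Fgen hlen halt heven hM g) (Fgen hlen halt heven hM g)⁻¹)
        = (Fgen hlen halt heven hM g) from rfl]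
      exact Fgen_apply hlen halt heven hM g _

theorem rhoHom_eval (w : FreeGroup Bool) (x : ℝ) :
    ((rhoHom hlen halt heven hM w : HomeoPlusMZ M) : Equiv.Perm ℝ) x
      = realList L (w.toWord) x := by
  conv_lhs => rw [← FreeGroup.mk_toWord (x := w)]
  rw [rhoHom, FreeGroup.lift_mk]
  exact prod_eval hlen halt heven hM _ x

end Perms

end CQM


namespace CQM

/-! ### Letter utilities -/

theorem invLetter_invLetter (p : Bool × Bool) : invLetter (invLetter p) = p := by
  cases p; simp [invLetter]

theorem invLetter_fst (p : Bool × Bool) : (invLetter p).1 = p.1 := rfl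

theorem invLetter_ne (p : Bool × Bool) : invLetter p ≠ p := by
  obtain ⟨a, s⟩ := p; cases s <;> simp [invLetter]

theorem letter_cases {z w : Bool × Bool} (hg : w.1 = z.1) : z = w ∨ z = invLetter w := by
  obtain ⟨a, s⟩ := z; obtain ⟨b, r⟩ := w
  simp only [invLetter]
  simp only [Prod.mk.injEq]
  cases s <;> cases r <;> simp_all

/-! ### Small values of the PL maps -/

theorem phiT_val {u : ℝ} (h : ¬ u ≤ 0) : phiT u = u/3 + 1 := if_neg h
theorem phiT_val' {u : ℝ} (h : u ≤ 0) : phiT u = 3*u + 1 := if_pos h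
theorem phiF_val {u : ℝ} (h : u ≤ 1) : phiF u = (u-1)/3 := if_pos h

section Invariant

variable {L : List (Bool × Bool)} {M : ℕ}
variable (hlen : L.length = M) (halt : AlternatingWord L) (heven : Even M) (hM : 2 ≤ M)

/-- Tracking invariant: after applying a (reduced) word whose first (outermost) letter is
`y`, the integer position `k` and the real position `t` are related as follows. -/
def InvSt (L : List (Bool × Bool)) (y : Bool × Bool) (k : ℤ) (t : ℝ) : Prop :=
  t = (k:ℝ) ∨
    ((k:ℝ) - 1/2 < t ∧ t < (k:ℝ) ∧ X L k = invLetter y) ∨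
    ((k:ℝ) < t ∧ t < (k:ℝ) + 1/2 ∧ X L (k-1) = y)

theorem rhoStep_eq (z : Bool × Bool) (i : ℤ) :
    rhoStep L z i =
      if z = X L i then i + 1
      else if z = invLetter (X L (i-1)) then i - 1 else i := rfl

include hlen halt heven hM

theorem X_flip_down (k : ℤ) : (X L (k-1)).1 = !(X L k).1 := by
  have := X_flip hlen halt heven hM (k-1)
  rw [show k - 1 + 1 = k by ring] at this
  rw [this, Bool.not_not]

theorem gen_dichotomy (z : Bool × Bool) (k : ℤ) :
    (X L k).1 = z.1 ∨ (X L (k-1)).1 = z.1 := by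
  by_cases h : (X L k).1 = z.1
  · exact Or.inl h
  · right
    rw [X_flip_down hlen halt heven hM k]
    cases hz : z.1 <;> cases hX : (X L k).1 <;> simp_all

/-- Transition from an exact state. -/
theorem step_exact (z : Bool × Bool) (k : ℤ) (t : ℝ) (ht : t = (k:ℝ)) :
    InvSt L z (rhoStep L z k) (realStep L z t) := by
  subst ht
  rcases gen_dichotomy hlen halt heven hM z k with hg | hg
  · -- k is a z.1-position
    have heval := rs_eval hlen halt heven hM z k ((k:ℝ)) hg (by linarith) (by linarith)
    rcases letter_cases hg with hz | hz
    · -- z = X L k : move up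
      have hrho : rhoStep L z k = k + 1 := by rw [rhoStep_eq, if_pos hz]
      have hcond : (X L k).2 = z.2 := by rw [hz]
      rw [hrho, heval, if_pos hcond]
      left
      have : phiT ((k:ℝ) - (k:ℝ)) = 1 := by
        rw [show (k:ℝ) - (k:ℝ) = 0 by ring, phiT_val' (le_refl 0)]
        ring
      rw [this]
      push_cast
      ring
    · -- z = invLetter (X L k) : fixed, drift left
      have hz' : z ≠ X L k := by
        rw [hz]; intro hcon
        exact invLetter_ne (X L k) hcon
      have hz'' : z ≠ invLetter (X L (k-1)) := by
        intro hcon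
        have : (X L (k-1)).1 = z.1 := by rw [hcon]; rfl
        rw [X_flip_down hlen halt heven hM k, hg] at this
        cases z.1 <;> simp_all
      have hrho : rhoStep L z k = k := by rw [rhoStep_eq, if_neg hz', if_neg hz'']
      have hcond : ¬ ((X L k).2 = z.2) := by
        rw [hz]; unfold invLetter
        cases hXk : (X L k).2 <;> simp
      rw [hrho, heval, if_neg hcond]
      right; left
      have : phiF ((k:ℝ) - (k:ℝ)) = -(1/3) := by
        rw [show (k:ℝ) - (k:ℝ) = 0 by ring, phiF_val (by norm_num)]
        ring
      rw [this]
      refine ⟨by linarith, by linarith, ?_⟩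
      rw [hz, invLetter_invLetter]
  · -- k-1 is a z.1-position
    have hgk : (X L k).1 ≠ z.1 := by
      rw [X_flip_down hlen halt heven hM k] at hg
      intro hcon
      rw [hcon] at hg
      cases z.1 <;> simp_all
    have hz0 : z ≠ X L k := fun hcon => hgk (by rw [hcon])
    have heval := rs_eval hlen halt heven hM z (k-1) ((k:ℝ)) hg
      (by push_cast; linarith) (by push_cast; linarith)
    rcases letter_cases hg with hz | hz
    · -- z = X L (k-1) : fixed, drift right
      have hz'' : z ≠ invLetter (X L (k-1)) := by
        rw [hz]; intro hcon
        exact invLetter_ne (X L (k-1)) hcon.symm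
      have hrho : rhoStep L z k = k := by rw [rhoStep_eq, if_neg hz0, if_neg hz'']
      have hcond : (X L (k-1)).2 = z.2 := by rw [hz]
      rw [hrho, heval, if_pos hcond]
      right; right
      have hu : (k:ℝ) - ((k:ℤ)-1 : ℤ) = 1 := by push_cast; ring
      rw [hu, phiT_val (by norm_num)]
      push_cast
      refine ⟨by linarith, by linarith, hz.symm⟩
    · -- z = invLetter (X L (k-1)) : move down
      have hrho : rhoStep L z k = k - 1 := by rw [rhoStep_eq, if_neg hz0, if_pos hz]
      have hcond : ¬ ((X L (k-1)).2 = z.2) := by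
        rw [hz]; unfold invLetter
        cases hXk : (X L (k-1)).2 <;> simp
      rw [hrho, heval, if_neg hcond]
      left
      have hu : (k:ℝ) - ((k:ℤ)-1 : ℤ) = 1 := by push_cast; ring
      rw [hu, phiF_val (by norm_num)]
      push_cast
      ring

/-- Transition from a general state of the invariant. -/
theorem step_main (z y : Bool × Bool) (k : ℤ) (t : ℝ)
    (hst : InvSt L y k t) (hnc : z ≠ invLetter y) :
    InvSt L z (rhoStep L z k) (realStep L z t) := by
  rcases hst with hE | hC | hD
  · exact step_exact hlen halt heven hM z k t hE
  · -- state C : t ∈ (k - 1/2, k), X L k = invLetter y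
    obtain ⟨h1, h2, hXk⟩ := hC
    have hnc' : z ≠ X L k := by
      rw [hXk]
      intro hcon
      exact hnc (by rw [hcon])
    by_cases hg : (X L k).1 = z.1
    · -- same generator: z = invLetter (X L k)
      have hz : z = invLetter (X L k) := by
        rcases letter_cases hg with h | h
        · exact absurd h hnc'
        · exact h
      have hz'' : z ≠ invLetter (X L (k-1)) := by
        intro hcon
        have hgc : (X L (k-1)).1 = z.1 := by rw [hcon]; rfl
        rw [X_flip_down hlen halt heven hM k, hg] at hgc
        cases z.1 <;> simp_all
      have hrho : rhoStep L z k = k := by rw [rhoStep_eq, if_neg hnc', if_neg hz'']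
      have heval := rs_eval hlen halt heven hM z k t hg (by linarith) (by linarith)
      have hcond : ¬ ((X L k).2 = z.2) := by
        rw [hz]; unfold invLetter
        cases hXk2 : (X L k).2 <;> simp
      rw [hrho, heval, if_neg hcond]
      right; left
      rw [phiF_val (by linarith)]
      refine ⟨by linarith, by linarith, ?_⟩
      rw [hz, invLetter_invLetter]
    · -- other generator: block k-1
      have hg' : (X L (k-1)).1 = z.1 := by
        rcases gen_dichotomy hlen halt heven hM z k with h | h
        · exact absurd h hg
        · exact h
      have heval := rs_eval hlen halt heven hM z (k-1) t hg'
        (by push_cast; linarith) (by push_cast; linarith)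
      rcases letter_cases hg' with hz | hz
      · -- z = X L (k-1) : fixed, to state D
        have hz'' : z ≠ invLetter (X L (k-1)) := by
          rw [hz]; intro hcon
          exact invLetter_ne (X L (k-1)) hcon.symm
        have hrho : rhoStep L z k = k := by rw [rhoStep_eq, if_neg hnc', if_neg hz'']
        have hcond : (X L (k-1)).2 = z.2 := by rw [hz]
        rw [hrho, heval, if_pos hcond]
        right; right
        have hu1 : ¬ (t - ((k:ℤ)-1 : ℤ) : ℝ) ≤ 0 := by push_cast; linarith
        rw [phiT_val hu1]
        push_cast
        refine ⟨by linarith, by linarith, hz.symm⟩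
      · -- z = invLetter (X L (k-1)) : move down, to state C at k-1
        have hrho : rhoStep L z k = k - 1 := by rw [rhoStep_eq, if_neg hnc', if_pos hz]
        have hcond : ¬ ((X L (k-1)).2 = z.2) := by
          rw [hz]; unfold invLetter
          cases hXk2 : (X L (k-1)).2 <;> simp
        rw [hrho, heval, if_neg hcond]
        right; left
        have hu1 : (t - ((k:ℤ)-1 : ℤ) : ℝ) ≤ 1 := by push_cast; linarith
        rw [phiF_val hu1]
        push_cast
        refine ⟨by linarith, by linarith, ?_⟩
        rw [hz, invLetter_invLetter]
  · -- state D : t ∈ (k, k+1/2), X L (k-1) = y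
    obtain ⟨h1, h2, hXk⟩ := hD
    have hnc' : z ≠ invLetter (X L (k-1)) := by
      rw [hXk]; exact hnc
    by_cases hg : (X L (k-1)).1 = z.1
    · -- same generator as k-1: z = X L (k-1), fixed, stay in D
      have hz : z = X L (k-1) := by
        rcases letter_cases hg with h | h
        · exact h
        · exact absurd h hnc'
      have hgk : (X L k).1 ≠ z.1 := by
        rw [X_flip_down hlen halt heven hM k] at hg
        intro hcon
        rw [hcon] at hg
        cases z.1 <;> simp_all
      have hz0 : z ≠ X L k := fun hcon => hgk (by rw [hcon])
      have hrho : rhoStep L z k = k := by rw [rhoStep_eq, if_neg hz0, if_neg hnc']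
      have heval := rs_eval hlen halt heven hM z (k-1) t hg
        (by push_cast; linarith) (by push_cast; linarith)
      have hcond : (X L (k-1)).2 = z.2 := by rw [hz]
      rw [hrho, heval, if_pos hcond]
      right; right
      have hu1 : ¬ (t - ((k:ℤ)-1 : ℤ) : ℝ) ≤ 0 := by push_cast; linarith
      rw [phiT_val hu1]
      push_cast
      refine ⟨by linarith, by linarith, hz.symm⟩
    · -- generator of k
      have hg' : (X L k).1 = z.1 := by
        rcases gen_dichotomy hlen halt heven hM z k with h | h
        · exact h
        · exact absurd h hg
      have heval := rs_eval hlen halt heven hM z k t hg' (by linarith) (by linarith)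
      rcases letter_cases hg' with hz | hz
      · -- z = X L k : move up, to state D at k+1
        have hrho : rhoStep L z k = k + 1 := by rw [rhoStep_eq, if_pos hz]
        have hcond : (X L k).2 = z.2 := by rw [hz]
        rw [hrho, heval, if_pos hcond]
        right; right
        have hu1 : ¬ (t - (k:ℝ)) ≤ 0 := by linarith
        rw [phiT_val hu1]
        push_cast
        refine ⟨by linarith, by linarith, ?_⟩
        rw [show (k:ℤ) + 1 - 1 = k by ring]
        exact hz.symm
      · -- z = invLetter (X L k) : fixed, to state C
        have hz0 : z ≠ X L k := by
          rw [hz]; intro hcon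
          exact invLetter_ne (X L k) hcon
        have hz'' : z ≠ invLetter (X L (k-1)) := hnc'
        have hrho : rhoStep L z k = k := by rw [rhoStep_eq, if_neg hz0, if_neg hz'']
        have hcond : ¬ ((X L k).2 = z.2) := by
          rw [hz]; unfold invLetter
          cases hXk2 : (X L k).2 <;> simp
        rw [hrho, heval, if_neg hcond]
        right; left
        have hu1 : (t - (k:ℝ)) ≤ 1 := by linarith
        rw [phiF_val hu1]
        refine ⟨by linarith, by linarith, ?_⟩
        rw [hz, invLetter_invLetter]

end Invariant

end CQM


namespace CQM

/-! ### Word-level dynamics and the comparison estimate -/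

/-- Integer word dynamics, on lists. -/
def rhoList (L : List (Bool × Bool)) (W : List (Bool × Bool)) : ℤ → ℤ :=
  (W.map (rhoStep L)).foldr (· ∘ ·) id

theorem rhoList_cons (L : List (Bool × Bool)) (y : Bool × Bool) (W : List (Bool × Bool))
    (k : ℤ) : rhoList L (y :: W) k = rhoStep L y (rhoList L W k) := rfl

theorem rhoWord_eq_list (L : List (Bool × Bool)) (w : FreeGroup Bool) :
    rhoWord L w = rhoList L w.toWord := rfl

/-- Words without adjacent cancelling pairs are `Chain'`-reduced. -/
theorem chain'_aux : ∀ (l : List (Bool × Bool)),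
    (∀ (l₁ l₂ : List (Bool × Bool)) (x : Bool) (b : Bool),
      l ≠ l₁ ++ (x, b) :: (x, !b) :: l₂) →
    l.Chain' (fun p q => q ≠ invLetter p)
  | [], _ => List.isChain_nil
  | [_], _ => List.isChain_singleton _
  | a :: c :: t, h => by
    show List.IsChain (fun p q => q ≠ invLetter p) (a :: c :: t)
    rw [List.isChain_cons_cons]
    constructor
    · intro hcon
      obtain ⟨x, b⟩ := a
      exact h [] t x b (by rw [hcon]; rfl)
    · exact chain'_aux (c :: t) (fun l₁ l₂ x b hcon => h (a :: l₁) l₂ x b (by rw [hcon]; rfl))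

theorem toWord_chain' (w : FreeGroup Bool) :
    w.toWord.Chain' (fun p q => q ≠ invLetter p) := by
  apply chain'_aux
  intro l₁ l₂ x b heq
  have hred : FreeGroup.reduce w.toWord = w.toWord := FreeGroup.reduce_toWord w
  exact FreeGroup.reduce.not (by rw [hred]; exact heq)

section WordInv

variable {L : List (Bool × Bool)} {M : ℕ}
variable (hlen : L.length = M) (halt : AlternatingWord L) (heven : Even M) (hM : 2 ≤ M)

include hlen halt heven hM

theorem word_inv (y : Bool × Bool) (W : List (Bool × Bool))
    (hch : (y :: W).Chain' (fun p q => q ≠ invLetter p)) :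
    InvSt L y (rhoList L (y :: W) 0) (realList L (y :: W) 0) := by
  induction W generalizing y with
  | nil =>
    have h0 : realList L [y] 0 = realStep L y 0 := rfl
    have h1 : rhoList L [y] 0 = rhoStep L y 0 := rfl
    rw [h0, h1]
    exact step_exact hlen halt heven hM y 0 0 (by norm_num)
  | cons y' W ih =>
    have hch' := hch.tail
    have hic := ih y' hch'
    have hhd : y' ≠ invLetter y := (List.isChain_cons_cons.mp hch).1
    have hnc : y ≠ invLetter y' := by
      intro hcon
      apply hhd
      rw [hcon, invLetter_invLetter]
    rw [rhoList_cons, realList_cons]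
    exact step_main hlen halt heven hM y y' _ _ hic hnc

theorem dist_le (w : FreeGroup Bool) :
    |realList L w.toWord 0 - ((rhoWord L w 0 : ℤ) : ℝ)| ≤ 1/2 := by
  rcases hW : w.toWord with _ | ⟨y, W⟩
  · have h1 : rhoWord L w 0 = 0 := by rw [rhoWord_eq_list, hW]; rfl
    have h2 : realList L [] 0 = (0:ℝ) := rfl
    rw [h1, h2]
    norm_num
  · have hch := toWord_chain' w
    rw [hW] at hch
    have hinv := word_inv hlen halt heven hM y W hch
    have h1 : rhoWord L w 0 = rhoList L (y :: W) 0 := by rw [rhoWord_eq_list, hW]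
    rw [h1]
    rcases hinv with hE | hC | hD
    · rw [hE]
      norm_num
    · obtain ⟨ha, hb, -⟩ := hC
      rw [abs_le]
      constructor <;> linarith
    · obtain ⟨ha, hb, -⟩ := hD
      rw [abs_le]
      constructor <;> linarith

end WordInv

end CQM


/-- **Circle quasimorphisms** (Theorem `ab circle action`).  Let `b` be an alternating word
of even length `M ≥ 2` in the free group `F(a,b)`.  Then for every `w ∈ F(a,b)` the limit
`rot̄_b(w) = lim_n ρ̄_b(wⁿ)(0)/n` exists, `rot̄_b` is a homogeneous quasimorphism of defect
at most `M`, and there is a homomorphism `ρ_b : F(a,b) → Homeo⁺_{Mℤ}(ℝ)` whose pulled-back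
rotation number agrees with `rot̄_b`. -/
theorem circle_quasimorphism_exists (b : FreeGroup Bool) (M : ℕ)
    (hlen : b.toWord.length = M) (halt : AlternatingWord b.toWord)
    (heven : Even M) (hM : 2 ≤ M) :
    ∃ rotb : FreeGroup Bool → ℝ,
      (∀ w : FreeGroup Bool,
        Tendsto (fun n : ℕ => (rhoWord b.toWord (w ^ n) 0 : ℝ) / (n : ℝ)) atTop
          (𝓝 (rotb w))) ∧
      (∀ (w : FreeGroup Bool) (k : ℤ), rotb (w ^ k) = (k : ℝ) * rotb w) ∧
      (∀ u v : FreeGroup Bool, |rotb u + rotb v - rotb (u * v)| ≤ (M : ℝ)) ∧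
      ∃ ρ : FreeGroup Bool →* HomeoPlusMZ M,
        ∀ w : FreeGroup Bool,
          Tendsto (fun n : ℕ => (((ρ w ^ n : HomeoPlusMZ M) : Equiv.Perm ℝ) (0 : ℝ)) / (n : ℝ))
            atTop (𝓝 (rotb w)) := by
  classical
  have hM0 : 0 < M := lt_of_lt_of_le two_pos hM
  have hMR : (0:ℝ) < M := by exact_mod_cast hM0
  have hMne : (M:ℝ) ≠ 0 := ne_of_gt hMR
  set L : List (Bool × Bool) := b.toWord with hL
  -- the homomorphism and the rescaled lifts
  set ρ : FreeGroup Bool →* HomeoPlusMZ M := CQM.rhoHom hlen halt heven hM with hρ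
  set Λ : HomeoPlusMZ M →* CircleDeg1Liftˣ := CQM.toLiftUnits hM0 with hΛ
  set rotb : FreeGroup Bool → ℝ :=
    fun w => (M:ℝ) * tnum ((Λ (ρ w) : CircleDeg1Liftˣ) : CircleDeg1Lift) with hrotb
  -- evaluation of the n-th power at 0
  have hpow : ∀ (w : FreeGroup Bool) (n : ℕ),
      (((Λ (ρ w) : CircleDeg1Liftˣ) : CircleDeg1Lift) ^ n) 0
        = (((ρ w ^ n : HomeoPlusMZ M) : Equiv.Perm ℝ) (0:ℝ)) / M := by
    intro w n
    have h1 : (((Λ (ρ w) : CircleDeg1Liftˣ) : CircleDeg1Lift) ^ n)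
        = ((Λ (ρ w) ^ n : CircleDeg1Liftˣ) : CircleDeg1Lift) := (Units.val_pow_eq_pow_val _ _).symm
    rw [h1, ← map_pow]
    rw [CQM.toLiftUnits_coe]
    rw [CQM.toLift_apply]
    rw [mul_zero]
  -- the main convergence statement for the permutation action
  have key : ∀ w : FreeGroup Bool,
      Tendsto (fun n : ℕ => (((ρ w ^ n : HomeoPlusMZ M) : Equiv.Perm ℝ) (0 : ℝ)) / (n : ℝ))
        atTop (𝓝 (rotb w)) := by
    intro w
    have h0 := CircleDeg1Lift.tendsto_translation_number₀
      ((Λ (ρ w) : CircleDeg1Liftˣ) : CircleDeg1Lift)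
    have h1 := h0.mul_const ((M:ℝ))
    have h2 : Tendsto (fun n : ℕ => (((ρ w ^ n : HomeoPlusMZ M) : Equiv.Perm ℝ) (0:ℝ)) / (n : ℝ))
        atTop (𝓝 (tnum ((Λ (ρ w) : CircleDeg1Liftˣ) : CircleDeg1Lift) * (M:ℝ))) := by
      apply Filter.Tendsto.congr _ h1
      intro n
      rw [hpow w n]
      rcases Nat.eq_zero_or_pos n with hn | hn
      · subst hn; simp
      · have hnne : ((n:ℝ)) ≠ 0 := by positivity
        field_simp
    have h3 : tnum ((Λ (ρ w) : CircleDeg1Liftˣ) : CircleDeg1Lift) * (M:ℝ) = rotb w := by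
      rw [hrotb]; ring
    rw [h3] at h2
    exact h2
  refine ⟨rotb, ?_, ?_, ?_, ⟨ρ, key⟩⟩
  · -- convergence of the integer model
    intro w
    have hdist : ∀ n : ℕ,
        |(rhoWord L (w ^ n) 0 : ℝ) - (((ρ w ^ n : HomeoPlusMZ M) : Equiv.Perm ℝ) (0:ℝ))|
          ≤ 1/2 := by
      intro n
      have h1 : ρ w ^ n = ρ (w ^ n) := (map_pow ρ w n).symm
      have h2 : (((ρ (w ^ n) : HomeoPlusMZ M) : Equiv.Perm ℝ)) (0:ℝ)
          = CQM.realList L ((w ^ n).toWord) 0 :=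
        CQM.rhoHom_eval hlen halt heven hM (w ^ n) 0
      rw [h1, h2]
      have h3 := CQM.dist_le hlen halt heven hM (w ^ n)
      rw [abs_sub_comm] at h3
      exact h3
    have hdiff : Tendsto (fun n : ℕ =>
        ((rhoWord L (w ^ n) 0 : ℝ) - (((ρ w ^ n : HomeoPlusMZ M) : Equiv.Perm ℝ) (0:ℝ))) / (n:ℝ))
        atTop (𝓝 0) := by
      apply squeeze_zero_norm _ (tendsto_const_div_atTop_nhds_zero_nat (1/2))
      intro n
      rcases Nat.eq_zero_or_pos n with hn | hn
      · subst hn; simp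
      · have hnpos : (0:ℝ) < n := by exact_mod_cast hn
        rw [Real.norm_eq_abs, abs_div, abs_of_pos hnpos]
        exact (div_le_div_iff_of_pos_right hnpos).mpr (hdist n)
    have hsum := hdiff.add (key w)
    rw [zero_add] at hsum
    have heq : (fun n : ℕ =>
        ((rhoWord L (w ^ n) 0 : ℝ) - (((ρ w ^ n : HomeoPlusMZ M) : Equiv.Perm ℝ) (0:ℝ))) / (n:ℝ)
          + (((ρ w ^ n : HomeoPlusMZ M) : Equiv.Perm ℝ) (0:ℝ)) / (n:ℝ))
        = fun n : ℕ => (rhoWord L (w ^ n) 0 : ℝ) / (n:ℝ) := by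
      funext n
      ring
    rw [heq] at hsum
    exact hsum
  · -- homogeneity
    intro w k
    have h1 : Λ (ρ (w ^ k)) = (Λ (ρ w)) ^ k := by
      rw [map_zpow, map_zpow]
    rw [hrotb]
    simp only [h1]
    rw [CircleDeg1Lift.translationNumber_zpow]
    ring
  · -- defect
    intro u v
    have h1 : Λ (ρ (u * v)) = Λ (ρ u) * Λ (ρ v) := by rw [map_mul, map_mul]
    have h2 : ((Λ (ρ u) * Λ (ρ v) : CircleDeg1Liftˣ) : CircleDeg1Lift)
        = ((Λ (ρ u) : CircleDeg1Liftˣ) : CircleDeg1Lift) *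
          ((Λ (ρ v) : CircleDeg1Liftˣ) : CircleDeg1Lift) := Units.val_mul _ _
    have hdef := units_defect (Λ (ρ u)) (Λ (ρ v))
    rw [hrotb]
    simp only [h1, h2]
    have : (M:ℝ) * tnum ((Λ (ρ u) : CircleDeg1Liftˣ) : CircleDeg1Lift)
        + (M:ℝ) * tnum ((Λ (ρ v) : CircleDeg1Liftˣ) : CircleDeg1Lift)
        - (M:ℝ) * tnum (((Λ (ρ u) : CircleDeg1Liftˣ) : CircleDeg1Lift) *
            ((Λ (ρ v) : CircleDeg1Liftˣ) : CircleDeg1Lift))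
        = (M:ℝ) * (tnum ((Λ (ρ u) : CircleDeg1Liftˣ) : CircleDeg1Lift)
            + tnum ((Λ (ρ v) : CircleDeg1Liftˣ) : CircleDeg1Lift)
            - tnum (((Λ (ρ u) : CircleDeg1Liftˣ) : CircleDeg1Lift) *
              ((Λ (ρ v) : CircleDeg1Liftˣ) : CircleDeg1Lift))) := by ring
    rw [this, abs_mul, abs_of_pos hMR]
    calc (M:ℝ) * |tnum ((Λ (ρ u) : CircleDeg1Liftˣ) : CircleDeg1Lift)
            + tnum ((Λ (ρ v) : CircleDeg1Liftˣ) : CircleDeg1Lift)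
            - tnum (((Λ (ρ u) : CircleDeg1Liftˣ) : CircleDeg1Lift) *
              ((Λ (ρ v) : CircleDeg1Liftˣ) : CircleDeg1Lift))|
        ≤ (M:ℝ) * 1 := by
          apply mul_le_mul_of_nonneg_left hdef (le_of_lt hMR)
      _ = (M:ℝ) := mul_one _
end

section
/- Let ‖·‖ be a degenerate norm on ℝⁿ. If the vanishing locus V^z = {v ∈ ℝⁿ : ‖v‖ = 0} is a rational subspace, then there exists a constant C > 0 such that every integer point P ∈ ℤⁿ satisfies either ‖P‖ = 0 or ‖P‖ ≥ C. -/
open scoped ENNReal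

/-- A *degenerate norm* on a real vector space `V`: a function `V → [0,∞]` vanishing at `0`,
positively homogeneous (`‖c • v‖ = |c| ‖v‖` for `c ≠ 0`) and satisfying the triangle
inequality. -/
structure IsDegenerateNorm {V : Type*} [AddCommGroup V] [Module ℝ V]
    (N : V → ℝ≥0∞) : Prop where
  map_zero : N 0 = 0
  smul : ∀ c : ℝ, c ≠ 0 → ∀ v : V, N (c • v) = ENNReal.ofReal |c| * N v
  add_le : ∀ u v : V, N (u + v) ≤ N u + N v

section AuxLemmas

open Metric Filter


private theorem seminorm_cont_aux {E : Type*} [NormedAddCommGroup E] [NormedSpace ℝ E]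
    [FiniteDimensional ℝ E] (p : E → ℝ)
    (hadd : ∀ x y, p (x + y) ≤ p x + p y)
    (hsmul : ∀ (c : ℝ) (x : E), p (c • x) = |c| * p x) :
    Continuous p := by
  classical
  have hzero : p 0 = 0 := by simpa using hsmul 0 0
  set b := Module.finBasis ℝ E with hb
  set q : E → ℝ := fun x => ∑ i, |b.coord i x| * p (b i) with hq
  have hqcont : Continuous q := by
    refine continuous_finset_sum _ fun i _ => ?_
    exact ((b.coord i).continuous_of_finiteDimensional).abs.mul continuous_const
  have hpq : ∀ x, p x ≤ q x := by
    intro x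
    conv_lhs => rw [← b.sum_repr x]
    refine le_trans (Finset.le_sum_of_subadditive p hzero.le hadd _ _) ?_
    refine Finset.sum_le_sum fun i _ => ?_
    rw [hsmul]
    simp [Module.Basis.coord_apply]
  have key : ∀ x y, dist (p x) (p y) ≤ q (x - y) := by
    intro x y
    have h1 : p x ≤ p y + p (x - y) := by
      have := hadd y (x - y); simpa using this
    have h2 : p y ≤ p x + p (x - y) := by
      have h3 := hadd x (y - x)
      have h4 : p (y - x) = p (x - y) := by
        have := hsmul (-1 : ℝ) (x - y); simpa [neg_sub] using this
      rw [h4] at h3; simpa using h3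
    rw [Real.dist_eq, abs_sub_le_iff]
    constructor <;> [skip; skip] <;> nlinarith [hpq (x - y)]
  rw [continuous_iff_continuousAt]
  intro x
  have hq0 : Tendsto (fun y => q (y - x)) (nhds x) (nhds 0) := by
    have hc : Continuous fun y => q (y - x) :=
      hqcont.comp (continuous_id.sub continuous_const)
    have h0 : q 0 = 0 := by simp [hq]
    simpa [sub_self, h0] using hc.tendsto x
  unfold ContinuousAt
  rw [tendsto_iff_dist_tendsto_zero]
  exact squeeze_zero (fun y => dist_nonneg) (fun y => key y x) hq0

private theorem seminorm_gap_aux {E : Type*} [NormedAddCommGroup E] [NormedSpace ℝ E]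
    [FiniteDimensional ℝ E] (p : E → ℝ)
    (hadd : ∀ x y, p (x + y) ≤ p x + p y)
    (hsmul : ∀ (c : ℝ) (x : E), p (c • x) = |c| * p x)
    (hcont : Continuous p)
    (Z : Submodule ℝ E) (hker : ∀ x, p x = 0 ↔ x ∈ Z) :
    ∃ c : ℝ, 0 < c ∧ ∀ x : E, c * Metric.infDist x (Z : Set E) ≤ p x := by
  obtain ⟨U, hU⟩ := Z.exists_isCompl
  have hnn : ∀ x, 0 ≤ p x := by
    intro x
    have h1 := hadd x (-x)
    have h2 : p (-x) = p x := by simpa using hsmul (-1 : ℝ) x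
    have h3 : p 0 = 0 := by simpa using hsmul 0 0
    rw [add_neg_cancel, h3, h2] at h1
    linarith
  -- lower bound on U
  have hUbound : ∃ c : ℝ, 0 < c ∧ ∀ u ∈ U, c * ‖u‖ ≤ p u := by
    set S : Set E := (U : Set E) ∩ sphere (0 : E) 1 with hS
    have hscale : ∀ u : E, u ∈ U → u ≠ 0 → (‖u‖⁻¹ • u) ∈ S := by
      intro u hu hne
      refine ⟨U.smul_mem _ hu, ?_⟩
      have : ‖u‖ ≠ 0 := norm_ne_zero_iff.mpr hne
      simp [norm_smul, abs_of_nonneg (inv_nonneg.mpr (norm_nonneg u)), inv_mul_cancel₀ this]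
    by_cases hSne : S.Nonempty
    · have hScomp : IsCompact S :=
        Metric.isCompact_of_isClosed_isBounded
          (U.closed_of_finiteDimensional.inter isClosed_sphere)
          ((isBounded_sphere).subset Set.inter_subset_right)
      obtain ⟨u₀, hu₀S, hmin⟩ := hScomp.exists_isMinOn hSne hcont.continuousOn
      have hu₀ne : u₀ ≠ 0 := by
        intro h
        have := hu₀S.2
        rw [h] at this
        simp at this
      have hpu₀ : 0 < p u₀ := by
        rcases lt_or_eq_of_le (hnn u₀) with h | h
        · exact h
        · exfalso
          have : u₀ ∈ Z := (hker u₀).1 h.symm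
          exact hu₀ne (Submodule.disjoint_def.mp hU.disjoint u₀ this hu₀S.1)
      refine ⟨p u₀, hpu₀, fun u hu => ?_⟩
      by_cases hune : u = 0
      · simp [hune, hnn]
      · have hS' := hscale u hu hune
        have h1 : p u₀ ≤ p (‖u‖⁻¹ • u) := hmin hS'
        rw [hsmul] at h1
        have hnorm : 0 < ‖u‖ := norm_pos_iff.mpr hune
        rw [abs_of_nonneg (inv_nonneg.mpr hnorm.le)] at h1
        calc p u₀ * ‖u‖ ≤ (‖u‖⁻¹ * p u) * ‖u‖ := by nlinarith
          _ = p u := by field_simp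
    · refine ⟨1, one_pos, fun u hu => ?_⟩
      by_cases hune : u = 0
      · simp [hune, hnn]
      · exact absurd ⟨_, hscale u hu hune⟩ hSne
  obtain ⟨c, hc, hcb⟩ := hUbound
  refine ⟨c, hc, fun x => ?_⟩
  set u : E := (U.linearProjOfIsCompl Z hU.symm x : E) with hu
  have hdecomp : (Z.linearProjOfIsCompl U hU x : E) + u = x :=
    Submodule.projection_add_projection_eq_self hU x
  have hz : x - u ∈ Z := by
    rw [← hdecomp]
    simp
  have hpz : p (x - u) = 0 := (hker _).2 hz
  have hpux : p u ≤ p x := by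
    have h1 := hadd (u - x) x
    have h2 : p (u - x) = p (x - u) := by
      have := hsmul (-1 : ℝ) (x - u); simpa [neg_sub] using this
    rw [h2, hpz] at h1
    simpa using h1
  have h1 : c * ‖u‖ ≤ p u := hcb u (U.linearProjOfIsCompl Z hU.symm x).2
  have h2 : infDist x (Z : Set E) ≤ ‖u‖ := by
    have := infDist_le_dist_of_mem (x := x) hz
    rwa [dist_eq_norm, sub_sub_cancel] at this
  calc c * infDist x (Z : Set E) ≤ c * ‖u‖ := by nlinarith
    _ ≤ p u := h1
    _ ≤ p x := hpux

private theorem lattice_gap_aux {n : ℕ} (Z : Submodule ℝ (Fin n → ℝ))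
    {ι : Type} [Fintype ι] (H : ι → Fin n → ℤ)
    (hspan : Z = Submodule.span ℝ (Set.range fun j => fun i => ((H j i : ℤ) : ℝ))) :
    ∃ ε : ℝ, 0 < ε ∧ ∀ P : Fin n → ℤ, (fun i => (P i : ℝ)) ∉ Z →
      ε ≤ Metric.infDist (fun i => (P i : ℝ)) (Z : Set (Fin n → ℝ)) := by
  classical
  set h : ι → (Fin n → ℝ) := fun j i => ((H j i : ℝ)) with hh
  set R : ℝ := ∑ j, ‖h j‖ with hR
  have hR0 : 0 ≤ R := Finset.sum_nonneg fun _ _ => norm_nonneg _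
  have hmemZ : ∀ j, h j ∈ Z := by
    intro j
    rw [hspan]
    exact Submodule.subset_span ⟨j, rfl⟩
  -- finiteness of integer points in ball
  set F : Set (Fin n → ℤ) := {y | ‖(fun i => (y i : ℝ) : Fin n → ℝ)‖ ≤ 1 + R} with hF
  have hFfin : F.Finite := by
    have hsub : F ⊆ Set.pi Set.univ (fun i : Fin n => {m : ℤ | |m| ≤ ⌈1 + R⌉}) := by
      intro y hy i _
      have h1 : |(y i : ℝ)| ≤ 1 + R := by
        have := (pi_norm_le_iff_of_nonneg (by linarith : (0:ℝ) ≤ 1 + R)).mp hy i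
        simpa [Real.norm_eq_abs] using this
      have h2 : (|y i| : ℝ) ≤ (⌈1 + R⌉ : ℝ) := by
        push_cast
        exact h1.trans (Int.le_ceil _)
      exact_mod_cast h2
    exact Set.Finite.subset (Set.Finite.pi fun i => Set.finite_Icc _ _ |>.subset
      (fun m hm => Set.mem_Icc.mpr (abs_le.mp hm))) hsub
  set F' : Finset (Fin n → ℤ) :=
    hFfin.toFinset.filter (fun y => (fun i => (y i : ℝ)) ∉ Z) with hF'
  have hZclosed : IsClosed (Z : Set (Fin n → ℝ)) := Z.closed_of_finiteDimensional
  have hZne : (Z : Set (Fin n → ℝ)).Nonempty := ⟨0, Z.zero_mem⟩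
  have hpos : ∀ y ∈ F', 0 < Metric.infDist (fun i => (y i : ℝ)) (Z : Set (Fin n → ℝ)) := by
    intro y hy
    rw [hF', Finset.mem_filter] at hy
    exact (hZclosed.notMem_iff_infDist_pos hZne).mp hy.2
  set ε : ℝ := if hne : F'.Nonempty
    then min 1 (F'.inf' hne fun y => Metric.infDist (fun i => (y i : ℝ)) (Z : Set (Fin n → ℝ)))
    else 1 with hε
  have hε0 : 0 < ε := by
    rw [hε]
    split_ifs with hne
    · refine lt_min one_pos ?_
      rw [Finset.lt_inf'_iff]
      exact fun y hy => hpos y hy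
    · exact one_pos
  have hε1 : ε ≤ 1 := by
    rw [hε]; split_ifs; exacts [min_le_left _ _, le_refl 1]
  have hεle : ∀ y : Fin n → ℤ, y ∈ F → (fun i => (y i : ℝ)) ∉ Z →
      ε ≤ Metric.infDist (fun i => (y i : ℝ)) (Z : Set (Fin n → ℝ)) := by
    intro y hyF hyZ
    have hyF' : y ∈ F' := by
      rw [hF', Finset.mem_filter]
      exact ⟨hFfin.mem_toFinset.mpr hyF, hyZ⟩
    have hne : F'.Nonempty := ⟨y, hyF'⟩
    rw [hε, dif_pos hne]
    exact le_trans (min_le_right _ _) (Finset.inf'_le _ hyF')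
  refine ⟨ε, hε0, fun P hP => ?_⟩
  by_contra hlt
  push_neg at hlt
  set x : Fin n → ℝ := fun i => (P i : ℝ) with hx
  obtain ⟨z, hzZ, hdz⟩ := (Metric.infDist_lt_iff hZne).mp hlt
  -- write z as combination of the h j
  have hzmem : z ∈ Submodule.span ℝ (Set.range h) := by
    rw [hspan] at hzZ; exact hzZ
  obtain ⟨c, hc⟩ := (Submodule.mem_span_range_iff_exists_fun ℝ).mp hzmem
  set m : ι → ℤ := fun j => round (c j) with hm
  set z' : Fin n → ℝ := ∑ j, (m j : ℝ) • h j with hz'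
  have hz'Z : z' ∈ Z := Submodule.sum_mem _ fun j _ => Z.smul_mem _ (hmemZ j)
  set Q : Fin n → ℤ := fun i => P i - ∑ j, m j * H j i with hQ
  have hQcast : (fun i => (Q i : ℝ)) = x - z' := by
    funext i
    have : z' i = ∑ j, (m j : ℝ) * (H j i : ℝ) := by
      rw [hz']
      simp [Finset.sum_apply, hh]
    simp only [hQ, Pi.sub_apply, this, hx]
    push_cast
    ring
  have hdiff : z - z' = ∑ j, (c j - (m j : ℝ)) • h j := by
    rw [hz', ← hc, ← Finset.sum_sub_distrib]
    simp [sub_smul]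
  have hdiffZ : z - z' ∈ Z := sub_mem hzZ hz'Z
  have hdiffnorm : ‖z - z'‖ ≤ R := by
    rw [hdiff]
    refine le_trans (norm_sum_le _ _) ?_
    rw [hR]
    refine Finset.sum_le_sum fun j _ => ?_
    rw [norm_smul, Real.norm_eq_abs]
    have h1 : |c j - (m j : ℝ)| ≤ 1 := by
      have h2 := abs_sub_round (c j)
      have h3 : ((m j : ℝ)) = ((round (c j) : ℤ) : ℝ) := by rw [hm]
      rw [h3]
      linarith
    nlinarith [norm_nonneg (h j)]
  have hdxz : ‖x - z‖ < ε := by rw [← dist_eq_norm]; exact hdz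
  have hQF : Q ∈ F := by
    show ‖(fun i => (Q i : ℝ) : Fin n → ℝ)‖ ≤ 1 + R
    rw [hQcast]
    have heq : x - z' = (x - z) + (z - z') := by abel
    rw [heq]
    have := norm_add_le (x - z) (z - z')
    have h5 : ‖x - z‖ ≤ 1 := by linarith
    linarith
  have hQZ : (fun i => (Q i : ℝ)) ∈ Z := by
    by_contra hQZ'
    have h1 := hεle Q hQF hQZ'
    have h2 : Metric.infDist (fun i => (Q i : ℝ)) (Z : Set (Fin n → ℝ))
        ≤ dist (x - z') (z - z') := by
      rw [hQcast]; exact infDist_le_dist_of_mem hdiffZ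
    rw [dist_eq_norm] at h2
    have h3 : x - z' - (z - z') = x - z := by abel
    rw [h3] at h2
    linarith
  apply hP
  show x ∈ Z
  have hxeq : x = (fun i => (Q i : ℝ)) + z' := by rw [hQcast]; abel
  rw [hxeq]
  exact Z.add_mem hQZ hz'Z

private theorem exists_integer_spanning {n : ℕ} (s : Set (Fin n → ℝ))
    (hs : ∀ v ∈ s, ∀ i, ∃ q : ℚ, v i = (q : ℝ)) :
    ∃ (ι : Type) (_ : Fintype ι) (H : ι → Fin n → ℤ),
      Submodule.span ℝ s = Submodule.span ℝ (Set.range fun j => fun i => ((H j i : ℝ))) := by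
  classical
  set Z := Submodule.span ℝ s with hZ
  set b := Module.finBasis ℝ ↥Z with hb
  have hmem : ∀ k, ((b k : ↥Z) : Fin n → ℝ) ∈ Submodule.span ℝ s := fun k => (b k).2
  choose t ht hbt using fun k => Submodule.mem_span_finite_of_mem_span (hmem k)
  set T : Finset (Fin n → ℝ) := Finset.univ.biUnion t with hT
  have hTs : (T : Set (Fin n → ℝ)) ⊆ s := by
    intro x hx
    rw [hT] at hx
    simp only [Finset.coe_biUnion, Set.mem_iUnion, Finset.mem_coe] at hx
    obtain ⟨k, _, hk⟩ := hx
    exact ht k hk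
  have hspanT : Submodule.span ℝ (T : Set (Fin n → ℝ)) = Z := by
    apply le_antisymm
    · rw [Submodule.span_le, hZ]
      exact fun x hx => Submodule.subset_span (hTs hx)
    · have himg : Submodule.span ℝ (⇑Z.subtype '' Set.range b) = Z := by
        rw [Submodule.span_image, b.span_eq, Submodule.map_subtype_top]
      rw [← himg, Submodule.span_le]
      rintro _ ⟨_, ⟨k, rfl⟩, rfl⟩
      refine Submodule.span_mono ?_ (hbt k)
      rw [hT]
      intro y hy
      simp only [Finset.coe_biUnion, Set.mem_iUnion, Finset.mem_coe]
      exact ⟨k, Finset.mem_univ k, hy⟩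
  have hq' : ∀ v : {y // y ∈ T}, ∀ i, ∃ qq : ℚ, (v : Fin n → ℝ) i = (qq : ℝ) :=
    fun v i => hs v (hTs v.2) i
  choose q hq using hq'
  set D : {y // y ∈ T} → ℕ := fun v => ∏ i, (q v i).den with hDdef
  have hDdvd : ∀ v i, (q v i).den ∣ D v := fun v i =>
    Finset.dvd_prod_of_mem _ (Finset.mem_univ i)
  have hD0 : ∀ v, (D v : ℝ) ≠ 0 := by
    intro v
    rw [Nat.cast_ne_zero, hDdef]
    exact Finset.prod_ne_zero_iff.mpr fun i _ => (q v i).den_nz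
  set H : {y // y ∈ T} → Fin n → ℤ := fun v i => (q v i).num * ((D v / (q v i).den : ℕ) : ℤ)
    with hHdef
  have key : ∀ v, (fun i => ((H v i : ℤ) : ℝ)) = (D v : ℝ) • (v : Fin n → ℝ) := by
    intro v
    funext i
    rw [Pi.smul_apply, smul_eq_mul, hq v i]
    set k : ℕ := D v / (q v i).den with hk
    have hden : ((q v i).den : ℚ) ≠ 0 := by
      exact_mod_cast (q v i).den_nz
    have hmul : ((q v i).den : ℚ) * (k : ℚ) = (D v : ℚ) := by
      exact_mod_cast congrArg (Nat.cast : ℕ → ℚ) (Nat.mul_div_cancel' (hDdvd v i))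
    have h1 : ((q v i).num : ℚ) = q v i * ((q v i).den : ℚ) := by
      have := (div_eq_iff hden).mp (Rat.num_div_den (q v i))
      exact_mod_cast this
    have hqq : ((H v i : ℤ) : ℚ) = (D v : ℚ) * q v i := by
      show (((q v i).num * (k : ℤ) : ℤ) : ℚ) = (D v : ℚ) * q v i
      push_cast
      rw [h1, mul_assoc, hmul]
      ring
    exact_mod_cast congrArg (fun r : ℚ => (r : ℝ)) hqq
  refine ⟨{y // y ∈ T}, inferInstance, H, ?_⟩
  rw [← hspanT]
  apply le_antisymm
  · rw [Submodule.span_le]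
    intro x hx
    have hxT : x ∈ T := hx
    set v : {y // y ∈ T} := ⟨x, hxT⟩ with hv
    have hxeq : x = (D v : ℝ)⁻¹ • ((D v : ℝ) • x) := (inv_smul_smul₀ (hD0 v) x).symm
    have hmem' : (fun i => ((H v i : ℤ) : ℝ)) ∈
        Submodule.span ℝ (Set.range fun j => fun i => ((H j i : ℝ))) :=
      Submodule.subset_span ⟨v, rfl⟩
    rw [key v] at hmem'
    rw [SetLike.mem_coe, hxeq]
    exact Submodule.smul_mem _ _ hmem'
  · rw [Submodule.span_le]
    rintro _ ⟨v, rfl⟩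
    have hv2 : (fun i => ((H v i : ℤ) : ℝ)) ∈ Submodule.span ℝ (T : Set (Fin n → ℝ)) := by
      rw [key v]
      exact Submodule.smul_mem _ _ (Submodule.subset_span v.2)
    exact hv2

end AuxLemmas

/-- **Automatic gap of degenerate norms with rational vanishing locus**
(Lemma `auto gap of norm`).  Let `‖·‖` be a degenerate norm on `ℝⁿ` whose vanishing locus
`{v : ‖v‖ = 0}` is a rational subspace (the span of a set of vectors with rational
coordinates).  Then there is `C > 0` such that every integer point `P ∈ ℤⁿ` has `‖P‖ = 0`
or `‖P‖ ≥ C`. -/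
theorem degenerate_norm_gap_on_integer_points {n : ℕ}
    (N : (Fin n → ℝ) → ℝ≥0∞) (hN : IsDegenerateNorm N)
    (s : Set (Fin n → ℝ)) (hs : ∀ v ∈ s, ∀ i, ∃ q : ℚ, v i = (q : ℝ))
    (hz : {v : Fin n → ℝ | N v = 0} = (Submodule.span ℝ s : Set (Fin n → ℝ))) :
    ∃ C : ℝ≥0∞, 0 < C ∧
      ∀ P : Fin n → ℤ, N (fun i => (P i : ℝ)) = 0 ∨ C ≤ N (fun i => (P i : ℝ)) := by
  classical
  obtain ⟨ι, hι, H, hspan⟩ := exists_integer_spanning s hs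
  letI : Fintype ι := hι
  set Z : Submodule ℝ (Fin n → ℝ) := Submodule.span ℝ s with hZ
  have hker : ∀ v, N v = 0 ↔ v ∈ Z := fun v => Set.ext_iff.mp hz v
  obtain ⟨ε, hε, hlat⟩ := lattice_gap_aux Z H hspan
  set W : Submodule ℝ (Fin n → ℝ) :=
    { carrier := {v | N v ≠ ⊤}
      add_mem' := by
        intro a b ha hb
        simp only [Set.mem_setOf_eq] at *
        intro h
        have h1 := hN.add_le a b
        rw [h] at h1
        exact (lt_irrefl _ (lt_of_le_of_lt h1
          (ENNReal.add_lt_top.mpr ⟨ha.lt_top, hb.lt_top⟩)))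
      zero_mem' := by simp [hN.map_zero]
      smul_mem' := by
        intro c x hx
        by_cases hc : c = 0
        · simp [hc, hN.map_zero]
        · simp only [Set.mem_setOf_eq] at *
          rw [hN.smul c hc]
          exact ENNReal.mul_ne_top ENNReal.ofReal_ne_top hx } with hW
  set p : ↥W → ℝ := fun w => (N w.val).toReal with hp
  have hWm : ∀ w : ↥W, N w.val ≠ ⊤ := fun w => w.2
  have hadd : ∀ x y : ↥W, p (x + y) ≤ p x + p y := by
    intro x y
    have h1 := hN.add_le x.val y.val
    have hx := hWm x
    have hy := hWm y
    show (N (x.val + y.val)).toReal ≤ (N x.val).toReal + (N y.val).toReal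
    rw [← ENNReal.toReal_add hx hy]
    exact ENNReal.toReal_mono (ENNReal.add_ne_top.mpr ⟨hx, hy⟩) h1
  have hsmul : ∀ (c : ℝ) (x : ↥W), p (c • x) = |c| * p x := by
    intro c x
    by_cases hc : c = 0
    · show (N ((c • x : ↥W) : Fin n → ℝ)).toReal = |c| * (N x.val).toReal
      rw [hc]
      simp [hN.map_zero]
    · show (N (c • x.val)).toReal = |c| * (N x.val).toReal
      rw [hN.smul c hc, ENNReal.toReal_mul, ENNReal.toReal_ofReal (abs_nonneg c)]
  set Z' : Submodule ℝ ↥W := Z.comap W.subtype with hZ'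
  have hker' : ∀ w : ↥W, p w = 0 ↔ w ∈ Z' := by
    intro w
    constructor
    · intro h
      have h0 : N w.val = 0 := by
        rcases (ENNReal.toReal_eq_zero_iff _).mp h with h' | h'
        exacts [h', absurd h' (hWm w)]
      exact (hker w.val).mp h0
    · intro h
      show (N w.val).toReal = 0
      rw [(hker w.val).mpr h]
      simp
  have hcont := seminorm_cont_aux p hadd hsmul
  obtain ⟨c, hc, hgap⟩ := seminorm_gap_aux p hadd hsmul hcont Z' hker'
  refine ⟨ENNReal.ofReal (c * ε), ENNReal.ofReal_pos.mpr (mul_pos hc hε), fun P => ?_⟩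
  by_cases h0 : N (fun i => (P i : ℝ)) = 0
  · exact Or.inl h0
  right
  by_cases htop : N (fun i => (P i : ℝ)) = ⊤
  · rw [htop]; exact le_top
  set x : Fin n → ℝ := fun i => (P i : ℝ) with hx
  set w : ↥W := ⟨x, htop⟩ with hwdef
  have hxZ : x ∉ Z := fun h => h0 ((hker x).mpr h)
  have h1 : ε ≤ Metric.infDist x (Z : Set (Fin n → ℝ)) := hlat P hxZ
  have h2 : Metric.infDist x (Z : Set (Fin n → ℝ)) ≤ Metric.infDist w (Z' : Set ↥W) := by
    by_contra hlt
    push_neg at hlt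
    have hZ'ne : (Z' : Set ↥W).Nonempty := ⟨0, Z'.zero_mem⟩
    obtain ⟨z', hz'mem, hz'd⟩ := (Metric.infDist_lt_iff hZ'ne).mp hlt
    have hde : dist w z' = dist x (z' : Fin n → ℝ) := Subtype.dist_eq w z'
    rw [hde] at hz'd
    exact absurd hz'd (not_lt.mpr (Metric.infDist_le_dist_of_mem hz'mem))
  have h3 : c * Metric.infDist w (Z' : Set ↥W) ≤ p w := hgap w
  have h4 : c * ε ≤ p w := by
    have ha := mul_le_mul_of_nonneg_left h1 hc.le
    have hb := mul_le_mul_of_nonneg_left h2 hc.le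
    linarith
  have h5 : N x = ENNReal.ofReal (p w) := (ENNReal.ofReal_toReal htop).symm
  show ENNReal.ofReal (c * ε) ≤ N x
  rw [h5]
  exact ENNReal.ofReal_le_ofReal h4
end

section
/- Let ‖·‖₁ and ‖·‖₂ be degenerate norms on a real vector space V, with unit balls B₁ and B₂, and let ‖·‖_m be their ℓ¹-mixture, with unit ball B_m. Then B_m equals the algebraic closure of the convex hull of B₁ ∪ B₂. -/
open scoped ENNReal

/-- The `ℓ¹`-mixture of two degenerate norms:
`‖v‖_m = inf { ‖v₁‖₁ + ‖v₂‖₂ : v₁ + v₂ = v }`. -/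
noncomputable def l1Mixture {V : Type*} [AddCommGroup V] [Module ℝ V]
    (N₁ N₂ : V → ℝ≥0∞) (v : V) : ℝ≥0∞ :=
  ⨅ u : V, N₁ u + N₂ (v - u)

/-- The *algebraic closure* of a subset `A` of a real vector space: the set of points `x`
for which there is a direction `d` such that for every `ε > 0` some `t ∈ [0, ε]` has
`x + t • d ∈ A`. -/
def linAlgebraicClosure {V : Type*} [AddCommGroup V] [Module ℝ V] (A : Set V) : Set V :=
  {x : V | ∃ d : V, ∀ ε : ℝ, 0 < ε → ∃ t : ℝ, 0 ≤ t ∧ t ≤ ε ∧ x + t • d ∈ A}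

section Aux
variable {V : Type*} [AddCommGroup V] [Module ℝ V] {N₁ N₂ : V → ℝ≥0∞}

lemma mix_le (v u : V) : l1Mixture N₁ N₂ v ≤ N₁ u + N₂ (v - u) := iInf_le _ u

lemma mix_add (h₁ : IsDegenerateNorm N₁) (h₂ : IsDegenerateNorm N₂) (u v : V) :
    l1Mixture N₁ N₂ (u + v) ≤ l1Mixture N₁ N₂ u + l1Mixture N₁ N₂ v := by
  have hrhs : l1Mixture N₁ N₂ u + l1Mixture N₁ N₂ v
      = ⨅ a : V, ⨅ b : V, (N₁ a + N₂ (u - a)) + (N₁ b + N₂ (v - b)) := by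
    simp only [l1Mixture]
    rw [ENNReal.iInf_add]
    exact iInf_congr fun a => ENNReal.add_iInf
  rw [hrhs]
  refine le_iInf fun a => le_iInf fun b => ?_
  calc l1Mixture N₁ N₂ (u + v) ≤ N₁ (a + b) + N₂ (u + v - (a + b)) := mix_le _ _
    _ ≤ (N₁ a + N₁ b) + (N₂ (u - a) + N₂ (v - b)) := by
        have h3 : u + v - (a + b) = (u - a) + (v - b) := by abel
        rw [h3]
        exact add_le_add (h₁.add_le a b) (h₂.add_le (u - a) (v - b))
    _ = N₁ a + N₂ (u - a) + (N₁ b + N₂ (v - b)) := by ring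

lemma mix_smul_le (h₁ : IsDegenerateNorm N₁) (h₂ : IsDegenerateNorm N₂)
    {c : ℝ} (hc : c ≠ 0) (v : V) :
    l1Mixture N₁ N₂ (c • v) ≤ ENNReal.ofReal |c| * l1Mixture N₁ N₂ v := by
  conv_rhs => rw [l1Mixture]
  rw [ENNReal.mul_iInf (fun h => absurd h ENNReal.ofReal_ne_top)]
  refine le_iInf fun w => ?_
  calc l1Mixture N₁ N₂ (c • v) ≤ N₁ (c • w) + N₂ (c • v - c • w) := mix_le _ _
    _ = ENNReal.ofReal |c| * (N₁ w + N₂ (v - w)) := by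
        rw [← smul_sub, h₁.smul c hc, h₂.smul c hc, mul_add]

lemma hull_subset_ball (h₁ : IsDegenerateNorm N₁) (h₂ : IsDegenerateNorm N₂) :
    convexHull ℝ ({v : V | N₁ v ≤ 1} ∪ {v : V | N₂ v ≤ 1}) ⊆
      {v : V | l1Mixture N₁ N₂ v ≤ 1} := by
  refine convexHull_min ?_ ?_
  · rintro v (hv | hv)
    · calc l1Mixture N₁ N₂ v ≤ N₁ v + N₂ (v - v) := mix_le _ _
        _ ≤ 1 := by simpa [h₂.map_zero] using hv
    · calc l1Mixture N₁ N₂ v ≤ N₁ 0 + N₂ (v - 0) := mix_le _ _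
        _ ≤ 1 := by simpa [h₁.map_zero] using hv
  · intro u hu v hv a b ha hb hab
    rcases eq_or_lt_of_le ha with rfl | ha'
    · rw [zero_add] at hab; subst hab
      simpa using hv
    rcases eq_or_lt_of_le hb with rfl | hb'
    · rw [add_zero] at hab; subst hab
      simpa using hu
    calc l1Mixture N₁ N₂ (a • u + b • v)
        ≤ l1Mixture N₁ N₂ (a • u) + l1Mixture N₁ N₂ (b • v) := mix_add h₁ h₂ _ _
      _ ≤ ENNReal.ofReal |a| * l1Mixture N₁ N₂ u
          + ENNReal.ofReal |b| * l1Mixture N₁ N₂ v :=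
          add_le_add (mix_smul_le h₁ h₂ ha'.ne' u) (mix_smul_le h₁ h₂ hb'.ne' v)
      _ ≤ ENNReal.ofReal a * 1 + ENNReal.ofReal b * 1 := by
          rw [abs_of_pos ha', abs_of_pos hb']
          exact add_le_add (mul_le_mul_right hu _) (mul_le_mul_right hv _)
      _ = ENNReal.ofReal (a + b) := by
          rw [mul_one, mul_one, ENNReal.ofReal_add ha hb]
      _ = 1 := by rw [hab, ENNReal.ofReal_one]

end Aux

/-- **Unit ball of the `ℓ¹`-mixture** (Lemma `norm ball`).  The unit ball of the
`ℓ¹`-mixture of two degenerate norms equals the algebraic closure of the convex hull of the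
union of their unit balls. -/
theorem l1Mixture_unit_ball {V : Type*} [AddCommGroup V] [Module ℝ V]
    (N₁ N₂ : V → ℝ≥0∞) (h₁ : IsDegenerateNorm N₁) (h₂ : IsDegenerateNorm N₂) :
    {v : V | l1Mixture N₁ N₂ v ≤ 1} =
      linAlgebraicClosure (convexHull ℝ ({v : V | N₁ v ≤ 1} ∪ {v : V | N₂ v ≤ 1})) := by
  ext v
  constructor
  · intro hv
    refine ⟨-v, fun ε hε => ?_⟩
    set t : ℝ := min ε (1/2) with ht
    have ht0 : 0 < t := lt_min hε (by norm_num)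
    have ht1 : t < 1 := lt_of_le_of_lt (min_le_right _ _) (by norm_num)
    refine ⟨t, ht0.le, min_le_left _ _, ?_⟩
    have hst : (0:ℝ) < 1 - t := by linarith
    -- find a near-optimal decomposition
    have hlt : l1Mixture N₁ N₂ v < ENNReal.ofReal (1 / (1 - t)) := by
      refine lt_of_le_of_lt hv ?_
      rw [← ENNReal.ofReal_one]
      exact ENNReal.ofReal_lt_ofReal_iff_of_nonneg zero_le_one |>.mpr
        (by rw [lt_div_iff₀ hst]; nlinarith)
    rw [l1Mixture, iInf_lt_iff] at hlt
    obtain ⟨u, hu⟩ := hlt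
    have hα : N₁ u ≠ ⊤ := fun h => by simp [h] at hu
    have hβ : N₂ (v - u) ≠ ⊤ := fun h => by simp [h] at hu
    set a : ℝ := (N₁ u).toReal with ha
    set b : ℝ := (N₂ (v - u)).toReal with hb
    have ha0 : 0 ≤ a := ENNReal.toReal_nonneg
    have hb0 : 0 ≤ b := ENNReal.toReal_nonneg
    set s : ℝ := 1 - t with hs
    have hab : s * (a + b) < 1 := by
      have hsum' : a + b < 1 / s := by
        rw [← ENNReal.ofReal_toReal hα, ← ENNReal.ofReal_toReal hβ,
          ← ENNReal.ofReal_add ha0 hb0] at hu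
        exact (ENNReal.ofReal_lt_ofReal_iff (by positivity)).mp hu
      calc s * (a + b) < s * (1 / s) := mul_lt_mul_of_pos_left hsum' hst
        _ = 1 := by field_simp
    set α' : ℝ := s * a with hα'
    set β' : ℝ := s * b with hβ'
    have hα'0 : 0 ≤ α' := by rw [hα']; positivity
    have hβ'0 : 0 ≤ β' := by rw [hβ']; positivity
    have hsum : α' + β' < 1 := by rw [hα', hβ']; nlinarith
    set lam : ℝ := α' + (1 - α' - β') / 2 with hlam
    have hlam0 : 0 < lam := by rw [hlam]; linarith
    have hlam1 : (0:ℝ) < 1 - lam := by rw [hlam]; linarith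
    have hgoal : v + t • (-v) = s • v := by
      rw [hs, sub_smul, one_smul, smul_neg]; abel
    rw [hgoal]
    set p₁ : V := lam⁻¹ • (s • u) with hp₁
    set p₂ : V := (1 - lam)⁻¹ • (s • (v - u)) with hp₂
    have hmem₁ : p₁ ∈ {w : V | N₁ w ≤ 1} := by
      show N₁ p₁ ≤ 1
      have hpos : (0:ℝ) < lam⁻¹ * s := mul_pos (inv_pos.mpr hlam0) hst
      rw [hp₁, ← smul_assoc, smul_eq_mul, h₁.smul _ hpos.ne',
        ← ENNReal.ofReal_toReal hα, ← ha, ← ENNReal.ofReal_mul (abs_nonneg _),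
        ← ENNReal.ofReal_one]
      refine ENNReal.ofReal_le_ofReal ?_
      rw [abs_of_pos hpos, mul_assoc, ← div_eq_inv_mul, div_le_one hlam0]
      rw [hlam]; clear_value t a b s α' β'; linarith [hα'.ge]
    have hmem₂ : p₂ ∈ {w : V | N₂ w ≤ 1} := by
      show N₂ p₂ ≤ 1
      have hpos : (0:ℝ) < (1 - lam)⁻¹ * s := mul_pos (inv_pos.mpr hlam1) hst
      rw [hp₂, ← smul_assoc, smul_eq_mul, h₂.smul _ hpos.ne',
        ← ENNReal.ofReal_toReal hβ, ← hb, ← ENNReal.ofReal_mul (abs_nonneg _),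
        ← ENNReal.ofReal_one]
      refine ENNReal.ofReal_le_ofReal ?_
      rw [abs_of_pos hpos, mul_assoc, ← div_eq_inv_mul, div_le_one hlam1]
      rw [hlam]; clear_value t a b s α' β'; linarith [hβ'.ge]
    have hcomb : s • v = lam • p₁ + (1 - lam) • p₂ := by
      rw [hp₁, hp₂, smul_inv_smul₀ hlam0.ne', smul_inv_smul₀ hlam1.ne', smul_sub]
      abel
    rw [hcomb]
    exact (convex_convexHull ℝ _)
      (subset_convexHull ℝ _ (Set.mem_union_left _ hmem₁))
      (subset_convexHull ℝ _ (Set.mem_union_right _ hmem₂))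
      hlam0.le (by linarith) (by ring)
  · rintro ⟨d, hd⟩
    refine ENNReal.le_of_forall_pos_le_add fun η hη _ => ?_
    obtain ⟨t₁, ht₁0, ht₁1, hmem₁⟩ := hd 1 one_pos
    rcases eq_or_lt_of_le ht₁0 with rfl | ht₁pos
    · have := hull_subset_ball h₁ h₂ (by simpa using hmem₁)
      exact le_trans this (le_add_right le_rfl)
    have hη' : (0:ℝ) < η := hη
    set ε₂ : ℝ := (η : ℝ) * t₁ / (2 + η) with hε₂
    have hε₂0 : 0 < ε₂ := by rw [hε₂]; positivity
    obtain ⟨t₂, ht₂0, ht₂ε, hmem₂⟩ := hd ε₂ hε₂0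
    rcases eq_or_lt_of_le ht₂0 with rfl | ht₂pos
    · have := hull_subset_ball h₁ h₂ (by simpa using hmem₂)
      exact le_trans this (le_add_right le_rfl)
    have hquot : t₂ * (2 + (η:ℝ)) ≤ (η:ℝ) * t₁ := by
      have h' := ht₂ε
      rw [hε₂] at h'
      rw [← le_div_iff₀ (by positivity)]
      exact h'
    have ht₂t₁ : t₂ < t₁ := by nlinarith
    set c₁ : ℝ := t₁ / (t₁ - t₂) with hc₁
    set c₂ : ℝ := t₂ / (t₁ - t₂) with hc₂
    have hden : (0:ℝ) < t₁ - t₂ := by linarith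
    have hc₁0 : 0 < c₁ := by rw [hc₁]; positivity
    have hc₂0 : 0 < c₂ := by rw [hc₂]; positivity
    have hkey : v = c₁ • (v + t₂ • d) + (-c₂) • (v + t₁ • d) := by
      rw [hc₁, hc₂]
      match_scalars <;> (field_simp; try ring)
    calc l1Mixture N₁ N₂ v
        ≤ l1Mixture N₁ N₂ (c₁ • (v + t₂ • d))
          + l1Mixture N₁ N₂ ((-c₂) • (v + t₁ • d)) := by
          nth_rewrite 1 [hkey]; exact mix_add h₁ h₂ _ _
      _ ≤ ENNReal.ofReal |c₁| * 1 + ENNReal.ofReal |(-c₂)| * 1 := by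
          refine add_le_add ?_ ?_
          · exact le_trans (mix_smul_le h₁ h₂ hc₁0.ne' _)
              (mul_le_mul_right (hull_subset_ball h₁ h₂ hmem₂) _)
          · exact le_trans (mix_smul_le h₁ h₂ (by simp [hc₂0.ne']) _)
              (mul_le_mul_right (hull_subset_ball h₁ h₂ hmem₁) _)
      _ = ENNReal.ofReal (c₁ + c₂) := by
          rw [mul_one, mul_one, abs_neg, abs_of_pos hc₁0, abs_of_pos hc₂0,
            ENNReal.ofReal_add hc₁0.le hc₂0.le]
      _ ≤ 1 + η := by
          have hle : c₁ + c₂ ≤ 1 + (η : ℝ) := by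
            rw [hc₁, hc₂, ← add_div, div_le_iff₀ hden]
            nlinarith
          calc ENNReal.ofReal (c₁ + c₂) ≤ ENNReal.ofReal (1 + (η:ℝ)) :=
              ENNReal.ofReal_le_ofReal hle
            _ = 1 + η := by
              rw [ENNReal.ofReal_add zero_le_one (by positivity), ENNReal.ofReal_one,
                ENNReal.ofReal_coe_nnreal]
end
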